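/- arXiv:1406.6670 — 4 statements merged into one kernel-verified Lean document; each statement's English description precedes it below -/
import Mathlib

section
/- A bounded sequence of real numbers (a_n) strongly Cesàro converges to a real number a (i.e., (1/n)·∑_{k=0}^{n-1} |a_k − a| → 0) if and only if there exists a set T ⊆ ℕ of full density (i.e., |T ∩ {0,…,n−1}|/n → 1) such that a_n → a along n ∈ T. -/
open scoped Classical

open Filter Finset


lemma density_aux (T : Set ℕ) :
    Tendsto (fun n : ℕ => (((Finset.range n).filter (· ∉ T)).card : ℝ) / n) atTop (nhds 0) ↔
    Tendsto (fun n : ℕ =>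
      (∑ k ∈ Finset.range n, if k ∈ T then (1 : ℝ) else 0) / n) atTop (nhds 1) := by
  have hsum : ∀ n : ℕ, (∑ k ∈ Finset.range n, if k ∈ T then (1 : ℝ) else 0)
      = (((Finset.range n).filter (· ∈ T)).card : ℝ) := by
    intro n; rw [Finset.sum_boole]
  have hcard : ∀ n : ℕ, (((Finset.range n).filter (· ∈ T)).card : ℝ)
      = n - (((Finset.range n).filter (· ∉ T)).card : ℝ) := by
    intro n
    have := Finset.card_filter_add_card_filter_not (s := Finset.range n)
      (p := fun k => k ∈ T)
    rw [Finset.card_range] at this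
    have : (((Finset.range n).filter (· ∈ T)).card : ℝ)
        + (((Finset.range n).filter (· ∉ T)).card : ℝ) = n := by
      exact_mod_cast this
    linarith
  have heq : ∀ n : ℕ, 1 ≤ n →
      (∑ k ∈ Finset.range n, if k ∈ T then (1 : ℝ) else 0) / n
        = 1 - (((Finset.range n).filter (· ∉ T)).card : ℝ) / n := by
    intro n hn
    have hn' : (n : ℝ) ≠ 0 := by positivity
    rw [hsum, hcard, sub_div, div_self hn']
  constructor
  · intro h
    have h1 : Tendsto (fun n : ℕ =>
        1 - (((Finset.range n).filter (· ∉ T)).card : ℝ) / n) atTop (nhds 1) := by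
      simpa using (tendsto_const_nhds (x := (1:ℝ)) (f := atTop)).sub h
    exact h1.congr' (by filter_upwards [eventually_ge_atTop 1] with n hn using (heq n hn).symm)
  · intro h
    have h1 : Tendsto (fun n : ℕ =>
        1 - (∑ k ∈ Finset.range n, if k ∈ T then (1 : ℝ) else 0) / n) atTop (nhds 0) := by
      simpa using (tendsto_const_nhds (x := (1:ℝ)) (f := atTop)).sub h
    exact h1.congr' (by filter_upwards [eventually_ge_atTop 1] with n hn; rw [heq n hn]; ring)
 
private lemma cesaro_fwd (a : ℕ → ℝ) (l : ℝ)
    (h : Tendsto (fun n : ℕ => (∑ k ∈ Finset.range n, |a k - l|) / n) atTop (nhds 0)) :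
    ∃ T : Set ℕ,
      Tendsto (fun n : ℕ => (((Finset.range n).filter (· ∉ T)).card : ℝ) / n) atTop (nhds 0) ∧
      Tendsto a (atTop ⊓ Filter.principal T) (nhds l) := by
  set S : ℕ → ℝ := fun n => ∑ k ∈ Finset.range n, |a k - l| with hS
  set cnt : ℕ → ℕ → ℕ := fun j n =>
    ((Finset.range n).filter (fun k => ((j:ℝ)+1)⁻¹ ≤ |a k - l|)).card with hcnt
  -- each cnt j n / n → 0
  have hcnt0 : ∀ j : ℕ, Tendsto (fun n : ℕ => (cnt j n : ℝ) / n) atTop (nhds 0) := by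
    intro j
    have hj : (0:ℝ) < (j:ℝ)+1 := by positivity
    have hle : ∀ n : ℕ, (cnt j n : ℝ) / n ≤ ((j:ℝ)+1) * (S n / n) := by
      intro n
      have h1 : (cnt j n : ℝ) * ((j:ℝ)+1)⁻¹ ≤
          ∑ k ∈ (Finset.range n).filter (fun k => ((j:ℝ)+1)⁻¹ ≤ |a k - l|), |a k - l| := by
        have := Finset.card_nsmul_le_sum
          ((Finset.range n).filter (fun k => ((j:ℝ)+1)⁻¹ ≤ |a k - l|))
          (fun k => |a k - l|) (((j:ℝ)+1)⁻¹)
          (fun x hx => (Finset.mem_filter.1 hx).2)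
        simp only [nsmul_eq_mul] at this
        exact this
      have h2 : ∑ k ∈ (Finset.range n).filter (fun k => ((j:ℝ)+1)⁻¹ ≤ |a k - l|), |a k - l|
          ≤ S n :=
        Finset.sum_le_sum_of_subset_of_nonneg (Finset.filter_subset _ _)
          (fun k _ _ => abs_nonneg _)
      have h3 : (cnt j n : ℝ) ≤ ((j:ℝ)+1) * S n := by
        rw [mul_comm, inv_mul_le_iff₀ hj] at h1
        exact h1.trans (mul_le_mul_of_nonneg_left h2 hj.le)
      rw [← mul_div_assoc]
      rcases Nat.eq_zero_or_pos n with rfl | hn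
      · simp
      · have hn' : (0:ℝ) < n := by exact_mod_cast hn
        gcongr
    exact squeeze_zero (fun n => by positivity) hle (by simpa using h.const_mul ((j:ℝ)+1))
  -- choose thresholds
  have hN : ∀ j : ℕ, ∃ N : ℕ, ∀ n ≥ N, 1 ≤ n ∧ (cnt j n : ℝ) / n < ((j:ℝ)+1)⁻¹ := by
    intro j
    have h1 : ∀ᶠ n : ℕ in atTop, (cnt j n : ℝ) / n < ((j:ℝ)+1)⁻¹ :=
      (hcnt0 j).eventually_lt_const (by positivity)
    have h2 := (eventually_ge_atTop 1).and h1
    obtain ⟨N, hN⟩ := eventually_atTop.mp h2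
    exact ⟨N, fun n hn => hN n hn⟩
  choose N hNspec using hN
  set seq : ℕ → ℕ := fun j => Nat.rec (N 0) (fun j ih => max (ih + 1) (N (j+1))) j with hseq
  have hseq0 : seq 0 = N 0 := rfl
  have hseqs : ∀ j, seq (j+1) = max (seq j + 1) (N (j+1)) := fun j => rfl
  have hNle : ∀ j, N j ≤ seq j := by
    intro j; cases j with
    | zero => exact le_refl _
    | succ j => rw [hseqs]; exact le_max_right _ _
  have hmono : ∀ j, seq j < seq (j+1) := by
    intro j; rw [hseqs]; exact lt_of_lt_of_le (Nat.lt_succ_self _) (le_max_left _ _)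
  have hjle : ∀ j, j ≤ seq j := by
    intro j; induction j with
    | zero => exact Nat.zero_le _
    | succ j ih => exact Nat.succ_le_of_lt (lt_of_le_of_lt ih (hmono j))
  have hkey : ∀ j n, seq j ≤ n → 1 ≤ n ∧ (cnt j n : ℝ) / n < ((j:ℝ)+1)⁻¹ :=
    fun j n hn => hNspec j n (le_trans (hNle j) hn)
  set T : Set ℕ := {k | ∀ j, seq j ≤ k → |a k - l| < ((j:ℝ)+1)⁻¹} with hT
  refine ⟨T, ?_, ?_⟩
  · -- density of complement → 0
    have hbound : ∀ j n, seq j ≤ n →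
        (((Finset.range n).filter (· ∉ T)).card : ℝ) / n < ((j:ℝ)+1)⁻¹ := by
      intro j n hn
      set J := Nat.findGreatest (fun i => seq i ≤ n) n with hJ
      have hjn : j ≤ n := le_trans (hjle j) hn
      have hjJ : j ≤ J := Nat.le_findGreatest hjn hn
      have hJspec : seq J ≤ n := Nat.findGreatest_spec (P := fun i => seq i ≤ n) hjn hn
      have hsub : (Finset.range n).filter (· ∉ T) ⊆
          (Finset.range n).filter (fun k => ((J:ℝ)+1)⁻¹ ≤ |a k - l|) := by
        intro k hk
        rw [Finset.mem_filter] at hk ⊢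
        obtain ⟨hkn, hkT⟩ := hk
        refine ⟨hkn, ?_⟩
        rw [hT, Set.mem_setOf_eq] at hkT
        push_neg at hkT
        obtain ⟨i, hik, hia⟩ := hkT
        have hin : i ≤ n := le_trans (le_trans (hjle i) hik) (Finset.mem_range.1 hkn).le
        have hiJ : i ≤ J := by
          by_contra hc
          exact Nat.findGreatest_is_greatest (lt_of_not_ge hc) hin
            (le_trans hik (Finset.mem_range.1 hkn).le)
        calc ((J:ℝ)+1)⁻¹ ≤ ((i:ℝ)+1)⁻¹ := by
              apply inv_anti₀ (by positivity)
              have : (i:ℝ) ≤ J := by exact_mod_cast hiJ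
              linarith
          _ ≤ |a k - l| := hia
      obtain ⟨hn1, hcntJ⟩ := hkey J n hJspec
      have hn' : (0:ℝ) < n := by exact_mod_cast hn1
      have hcard' : ((Finset.range n).filter (· ∉ T)).card ≤ cnt J n :=
        Finset.card_le_card hsub
      have hcard : (((Finset.range n).filter (· ∉ T)).card : ℝ) ≤ (cnt J n : ℝ) := by
        exact_mod_cast hcard'
      have hJj : ((J:ℝ)+1)⁻¹ ≤ ((j:ℝ)+1)⁻¹ := by
        apply inv_anti₀ (by positivity)
        have : (j:ℝ) ≤ J := by exact_mod_cast hjJ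
        linarith
      calc (((Finset.range n).filter (· ∉ T)).card : ℝ) / n
          ≤ (cnt J n : ℝ) / n := by gcongr
        _ < ((J:ℝ)+1)⁻¹ := hcntJ
        _ ≤ ((j:ℝ)+1)⁻¹ := hJj
    rw [Metric.tendsto_nhds]
    intro ε hε
    obtain ⟨j, hj⟩ := exists_nat_one_div_lt hε
    rw [one_div] at hj
    filter_upwards [eventually_ge_atTop (seq j)] with n hn
    have h1 := hbound j n hn
    rw [Real.dist_eq, sub_zero, abs_of_nonneg (by positivity)]
    exact lt_trans h1 hj
  · -- convergence along T
    rw [Metric.tendsto_nhds]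
    intro ε hε
    obtain ⟨j, hj⟩ := exists_nat_one_div_lt hε
    rw [one_div] at hj
    rw [eventually_inf_principal]
    filter_upwards [eventually_ge_atTop (seq j)] with k hk hkT
    rw [Real.dist_eq]
    exact lt_trans (hkT j hk) hj


private lemma cesaro_bwd (a : ℕ → ℝ) (l : ℝ) (M : ℝ) (hbdd : ∀ n, |a n| ≤ M) (T : Set ℕ)
    (hb : Tendsto (fun n : ℕ => (((Finset.range n).filter (· ∉ T)).card : ℝ) / n) atTop (nhds 0))
    (hconv : Tendsto a (atTop ⊓ Filter.principal T) (nhds l)) :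
    Tendsto (fun n : ℕ => (∑ k ∈ Finset.range n, |a k - l|) / n) atTop (nhds 0) := by
  set b : ℕ → ℕ := fun n => ((Finset.range n).filter (· ∉ T)).card with hbdef
  set C : ℝ := M + |l| + 1 with hC
  have hC0 : 0 < C := by
    have := hbdd 0
    have := abs_nonneg (a 0)
    have := abs_nonneg l
    linarith
  have hCb : ∀ k, |a k - l| ≤ C := by
    intro k
    calc |a k - l| ≤ |a k| + |l| := abs_sub _ _
      _ ≤ M + |l| + 1 := by have := hbdd k; linarith
  rw [Metric.tendsto_nhds]
  intro ε hε
  have h1 : ∀ᶠ k : ℕ in atTop, k ∈ T → |a k - l| < ε/2 := by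
    rw [← eventually_inf_principal]
    have := Metric.tendsto_nhds.mp hconv (ε/2) (by positivity)
    simpa [Real.dist_eq] using this
  obtain ⟨N, hN⟩ := eventually_atTop.mp h1
  -- key bound
  have hSb : ∀ n : ℕ, (∑ k ∈ Finset.range n, |a k - l|) ≤ ε/2 * n + C * (N + b n) := by
    intro n
    have hsplit : ∑ k ∈ (Finset.range n).filter (fun k => N ≤ k ∧ k ∈ T), |a k - l|
        + ∑ k ∈ (Finset.range n).filter (fun k => ¬(N ≤ k ∧ k ∈ T)), |a k - l|
        = ∑ k ∈ Finset.range n, |a k - l| :=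
      Finset.sum_filter_add_sum_filter_not (Finset.range n)
        (fun k => N ≤ k ∧ k ∈ T) (fun k => |a k - l|)
    have hgood : ∑ k ∈ (Finset.range n).filter (fun k => N ≤ k ∧ k ∈ T), |a k - l|
        ≤ ε/2 * n := by
      have := Finset.sum_le_card_nsmul ((Finset.range n).filter (fun k => N ≤ k ∧ k ∈ T))
        (fun k => |a k - l|) (ε/2)
        (fun x hx => by
          obtain ⟨-, hx2⟩ := Finset.mem_filter.1 hx
          exact (hN x hx2.1 hx2.2).le)
      have hcard : ((Finset.range n).filter (fun k => N ≤ k ∧ k ∈ T)).card ≤ n := by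
        simpa using Finset.card_filter_le (Finset.range n) _
      calc ∑ k ∈ (Finset.range n).filter (fun k => N ≤ k ∧ k ∈ T), |a k - l|
          ≤ ((Finset.range n).filter (fun k => N ≤ k ∧ k ∈ T)).card • (ε/2) := this
        _ = ((Finset.range n).filter (fun k => N ≤ k ∧ k ∈ T)).card * (ε/2) := by
            rw [nsmul_eq_mul]
        _ ≤ n * (ε/2) := by
            apply mul_le_mul_of_nonneg_right _ (by positivity)
            exact_mod_cast hcard
        _ = ε/2 * n := by ring
    have hbadcard : ((Finset.range n).filter (fun k => ¬(N ≤ k ∧ k ∈ T))).card ≤ N + b n := by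
      have hsub : (Finset.range n).filter (fun k => ¬(N ≤ k ∧ k ∈ T)) ⊆
          (Finset.range n).filter (fun k => k < N) ∪ (Finset.range n).filter (· ∉ T) := by
        intro k hk
        rw [Finset.mem_filter] at hk
        obtain ⟨hkn, hk2⟩ := hk
        rw [Finset.mem_union, Finset.mem_filter, Finset.mem_filter]
        rcases not_and_or.mp hk2 with h | h
        · exact Or.inl ⟨hkn, Nat.lt_of_not_le h⟩
        · exact Or.inr ⟨hkn, h⟩
      calc ((Finset.range n).filter (fun k => ¬(N ≤ k ∧ k ∈ T))).card
          ≤ ((Finset.range n).filter (fun k => k < N) ∪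
              (Finset.range n).filter (· ∉ T)).card := Finset.card_le_card hsub
        _ ≤ ((Finset.range n).filter (fun k => k < N)).card + b n := Finset.card_union_le _ _
        _ ≤ N + b n := by
            have : (Finset.range n).filter (fun k => k < N) ⊆ Finset.range N := by
              intro k hk
              rw [Finset.mem_range]
              exact (Finset.mem_filter.1 hk).2
            have := Finset.card_le_card this
            rw [Finset.card_range] at this
            omega
    have hbad : ∑ k ∈ (Finset.range n).filter (fun k => ¬(N ≤ k ∧ k ∈ T)), |a k - l|
        ≤ C * (N + b n) := by
      have := Finset.sum_le_card_nsmul ((Finset.range n).filter (fun k => ¬(N ≤ k ∧ k ∈ T)))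
        (fun k => |a k - l|) C (fun x _ => hCb x)
      rw [nsmul_eq_mul] at this
      calc ∑ k ∈ (Finset.range n).filter (fun k => ¬(N ≤ k ∧ k ∈ T)), |a k - l|
          ≤ ((Finset.range n).filter (fun k => ¬(N ≤ k ∧ k ∈ T))).card * C := this
        _ ≤ (N + b n : ℝ) * C := by
            apply mul_le_mul_of_nonneg_right _ hC0.le
            exact_mod_cast hbadcard
        _ = C * (N + b n) := by ring
    calc (∑ k ∈ Finset.range n, |a k - l|)
        = ∑ k ∈ (Finset.range n).filter (fun k => N ≤ k ∧ k ∈ T), |a k - l|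
          + ∑ k ∈ (Finset.range n).filter (fun k => ¬(N ≤ k ∧ k ∈ T)), |a k - l| :=
          hsplit.symm
      _ ≤ ε/2 * n + C * (N + b n) := add_le_add hgood hbad
  -- tail term tends to 0
  have h2 : Tendsto (fun n : ℕ => C * (((N:ℝ) + b n) / n)) atTop (nhds 0) := by
    have hNn : Tendsto (fun n : ℕ => (N:ℝ) / n) atTop (nhds 0) :=
      tendsto_const_div_atTop_nhds_zero_nat (N:ℝ)
    have hadd : Tendsto (fun n : ℕ => (N:ℝ)/n + (b n : ℝ)/n) atTop (nhds 0) := by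
      simpa using hNn.add hb
    have : Tendsto (fun n : ℕ => C * ((N:ℝ)/n + (b n : ℝ)/n)) atTop (nhds 0) := by
      simpa using hadd.const_mul C
    apply this.congr
    intro n
    rw [add_div]
  have h3 : ∀ᶠ n : ℕ in atTop, C * (((N:ℝ) + b n) / n) < ε/2 :=
    h2.eventually_lt_const (by positivity)
  filter_upwards [h3, eventually_ge_atTop 1] with n hn3 hn1
  have hn' : (0:ℝ) < n := by exact_mod_cast hn1
  rw [Real.dist_eq, sub_zero, abs_of_nonneg (by positivity)]
  have : (∑ k ∈ Finset.range n, |a k - l|) / n ≤ ε/2 + C * (((N:ℝ) + b n) / n) := by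
    rw [← mul_div_assoc]
    calc (∑ k ∈ Finset.range n, |a k - l|) / n ≤ (ε/2 * n + C * (N + b n)) / n := by
          gcongr
          exact hSb n
      _ = ε/2 + C * ((N:ℝ) + b n) / n := by
          field_simp
  linarith


/-- A bounded real sequence strongly Cesàro converges to `l` iff there is a full-density
set `T ⊆ ℕ` along which the sequence converges to `l`. -/
theorem bounded_strong_cesaro_iff_full_density
    (a : ℕ → ℝ) (l : ℝ) (M : ℝ) (hbdd : ∀ n, |a n| ≤ M) :
    Tendsto (fun n : ℕ => (∑ k ∈ Finset.range n, |a k - l|) / n) atTop (nhds 0) ↔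
      ∃ T : Set ℕ,
        Tendsto (fun n : ℕ =>
          (∑ k ∈ Finset.range n, if k ∈ T then (1 : ℝ) else 0) / n) atTop (nhds 1) ∧
        Tendsto a (atTop ⊓ Filter.principal T) (nhds l) := by
  constructor
  · intro h
    obtain ⟨T, hT1, hT2⟩ := cesaro_fwd a l h
    exact ⟨T, (density_aux T).1 hT1, hT2⟩
  · rintro ⟨T, hT1, hT2⟩
    exact cesaro_bwd a l M hbdd T ((density_aux T).2 hT1) hT2
end

section
/- Let A be a finite nonempty set, Ω = A^ℤ, T the left shift, and μ a stationary probability measure on Ω. Then μ-almost surely, (1/N)∑_{n=0}^{N-1} ‖μ(ζ_n = · | ζ_0,…,ζ_{n-1}) − μ(ζ_n = · | F_{−∞}^{n-1})‖ → 0 as N → ∞. That is, a Bayesian observer who sees the process only from time 0 onward makes, in strong Cesàro sense, the same one-step predictions as one who knows the entire infinite past. -/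
open MeasureTheory Filter

/-- The left shift on `A^ℤ`. -/
def shiftZ {A : Type*} (ω : ℤ → A) : ℤ → A := fun n => ω (n + 1)

/-- The σ-algebra on `A^ℤ` generated by the coordinates with index in `s`. -/
def coordSigma (A : Type*) [MeasurableSpace A] (s : Set ℤ) : MeasurableSpace (ℤ → A) :=
  ⨆ k ∈ s, MeasurableSpace.comap (fun ω : ℤ → A => ω k) inferInstance

/-- A version of the conditional probability `μ(ζ_n = a | m)`, as a conditional
expectation of the indicator of `{ζ_n = a}`. -/
noncomputable def condProbCoord {A : Type*} [MeasurableSpace A] [DecidableEq A]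
    (μ : Measure (ℤ → A)) (m : MeasurableSpace (ℤ → A)) (n : ℤ) (a : A) : (ℤ → A) → ℝ :=
  μ[fun ω => if ω n = a then (1 : ℝ) else 0 | m]

open Finset Topology

set_option linter.unusedSectionVars false


section Ergodic

variable {Ω : Type*} [MeasurableSpace Ω] (μ : Measure Ω) [IsProbabilityMeasure μ]
  {T : Ω → Ω}

/-- Birkhoff sums. -/
noncomputable def bS (T : Ω → Ω) (f : Ω → ℝ) (n : ℕ) (ω : Ω) : ℝ :=
  ∑ k ∈ Finset.range n, f (T^[k] ω)

lemma bS_succ (T : Ω → Ω) (f : Ω → ℝ) (n : ℕ) (ω : Ω) :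
    bS T f (n + 1) ω = f ω + bS T f n (T ω) := by
  simp only [bS, Finset.sum_range_succ']
  simp [Function.iterate_succ_apply, add_comm]

lemma bS_measurable (hT : Measurable T) {f : Ω → ℝ} (hf : Measurable f) (n : ℕ) :
    Measurable (bS T f n) := by
  apply Finset.measurable_sum
  exact fun k _ => hf.comp (hT.iterate k)

lemma integrable_of_bdd {f : Ω → ℝ} (hf : Measurable f) {C : ℝ} (h : ∀ ω, |f ω| ≤ C) :
    Integrable f μ := by
  refine Integrable.mono' (integrable_const C) hf.aestronglyMeasurable ?_
  exact Filter.Eventually.of_forall fun ω => by simpa using h ω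

lemma bS_bdd {f : Ω → ℝ} {C : ℝ} (h : ∀ ω, |f ω| ≤ C) (n : ℕ) (ω : Ω) :
    |bS T f n ω| ≤ n * C := by
  calc |bS T f n ω| ≤ ∑ k ∈ Finset.range n, |f (T^[k] ω)| := Finset.abs_sum_le_sum_abs _ _
    _ ≤ ∑ _k ∈ Finset.range n, C := Finset.sum_le_sum fun k _ => h _
    _ = n * C := by simp [mul_comm]

/-- **Maximal ergodic theorem** (Garsia's proof). -/
lemma maximal_ergodic (hT : MeasurePreserving T μ μ) {f : Ω → ℝ} (hf : Measurable f)
    {C : ℝ} (hC : ∀ ω, |f ω| ≤ C) :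
    0 ≤ ∫ ω in {ω | ∃ n, 0 < bS T f n ω}, f ω ∂μ := by
  classical
  set M : ℕ → Ω → ℝ := fun N ω => (Finset.range (N + 1)).sup' nonempty_range_add_one
      (fun n => bS T f n ω) with hM
  have hMmeas : ∀ N, Measurable (M N) := fun N =>
    Finset.measurable_range_sup'' fun k _ => bS_measurable hT.measurable hf k
  have hMnonneg : ∀ N ω, 0 ≤ M N ω := fun N ω => by
    have h0 : bS T f 0 ω = 0 := by simp [bS]
    have := Finset.le_sup' (fun n => bS T f n ω) (Finset.mem_range.2 (Nat.succ_pos N))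
    rw [h0] at this; exact this
  have hMbd : ∀ N ω, |M N ω| ≤ (N + 1) * (|C| + 1) := by
    intro N ω
    rw [abs_of_nonneg (hMnonneg N ω)]
    apply Finset.sup'_le
    intro n hn
    have h1 : bS T f n ω ≤ n * C := (abs_le.1 (bS_bdd hC n ω)).2
    have hn' : (n : ℝ) ≤ N + 1 := by
      have := Finset.mem_range.1 hn; exact_mod_cast this.le
    nlinarith [abs_nonneg C, le_abs_self C, Nat.cast_nonneg (α := ℝ) n]
  have hMint : ∀ N, Integrable (M N) μ := fun N => integrable_of_bdd μ (hMmeas N) (hMbd N)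
  -- key pointwise inequality
  have hkey : ∀ N ω, M N ω ≤ max (f ω + M N (T ω)) 0 := by
    intro N ω
    apply Finset.sup'_le
    intro n hn
    cases n with
    | zero => simp [bS]
    | succ m =>
      rw [bS_succ]
      have hmem : m ∈ Finset.range (N + 1) := by
        have := Finset.mem_range.1 hn; exact Finset.mem_range.2 (by omega)
      have : bS T f m (T ω) ≤ M N (T ω) := Finset.le_sup' (fun n => bS T f n (T ω)) hmem
      exact le_max_of_le_left (by linarith)
  have hkey' : ∀ N ω, 0 < M N ω → M N ω ≤ f ω + M N (T ω) := by
    intro N ω hpos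
    rcases le_or_gt (f ω + M N (T ω)) 0 with h | h
    · exact absurd ((hkey N ω).trans (by simp [h])) (not_le.2 hpos)
    · exact (hkey N ω).trans (by simp [le_of_lt h])
  -- the sets E_N
  set E : ℕ → Set Ω := fun N => {ω | 0 < M N ω} with hE
  have hEmeas : ∀ N, MeasurableSet (E N) := fun N => measurableSet_lt measurable_const (hMmeas N)
  have hfint : Integrable f μ := integrable_of_bdd μ hf hC
  -- integral inequality on E_N
  have hstep : ∀ N, 0 ≤ ∫ ω in E N, f ω ∂μ := by
    intro N
    have hMTint : Integrable (fun ω => M N (T ω)) μ :=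
      (hT.integrable_comp (hMmeas N).aestronglyMeasurable).2 (hMint N)
    have h1 : ∫ ω in E N, (M N ω - M N (T ω)) ∂μ ≤ ∫ ω in E N, f ω ∂μ := by
      apply setIntegral_mono_on ((hMint N).sub hMTint).integrableOn hfint.integrableOn (hEmeas N)
      intro ω hω
      have := hkey' N ω hω
      simp only [Pi.sub_apply]
      linarith
    have h2 : ∫ ω in E N, M N ω ∂μ = ∫ ω, M N ω ∂μ := by
      apply setIntegral_eq_integral_of_forall_compl_eq_zero
      intro ω hω
      have : ¬ 0 < M N ω := hω
      linarith [hMnonneg N ω, not_lt.1 this]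
    have h3 : ∫ ω in E N, M N (T ω) ∂μ ≤ ∫ ω, M N (T ω) ∂μ :=
      setIntegral_le_integral hMTint (Filter.Eventually.of_forall fun ω => hMnonneg N (T ω))
    have h4 : ∫ ω, M N (T ω) ∂μ = ∫ ω, M N ω ∂μ := by
      calc ∫ ω, M N (T ω) ∂μ = ∫ y, M N y ∂(Measure.map T μ) :=
            (integral_map hT.measurable.aemeasurable (hMmeas N).aestronglyMeasurable).symm
        _ = ∫ ω, M N ω ∂μ := by rw [hT.map_eq]
    have h5 : ∫ ω in E N, (M N ω - M N (T ω)) ∂μ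
        = ∫ ω in E N, M N ω ∂μ - ∫ ω in E N, M N (T ω) ∂μ :=
      integral_sub (hMint N).integrableOn hMTint.integrableOn
    rw [h5, h2] at h1
    linarith [h3, h4, h1]
  -- monotone limit
  have hEmono : Monotone E := by
    intro N N' hle ω hω
    have : M N ω ≤ M N' ω := by
      apply Finset.sup'_le
      intro n hn
      exact Finset.le_sup' (fun n => bS T f n ω)
        (Finset.mem_range.2 (lt_of_lt_of_le (Finset.mem_range.1 hn) (by omega)))
    exact lt_of_lt_of_le hω this
  have hEunion : (⋃ N, E N) = {ω | ∃ n, 0 < bS T f n ω} := by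
    ext ω
    simp only [Set.mem_iUnion, Set.mem_setOf_eq, hE]
    constructor
    · rintro ⟨N, hN⟩
      rcases Finset.exists_mem_eq_sup' (nonempty_range_add_one (n := N)) (fun n => bS T f n ω)
        with ⟨n, _, hn⟩
      exact ⟨n, by rw [← hn]; exact hN⟩
    · rintro ⟨n, hn⟩
      exact ⟨n, lt_of_lt_of_le hn (Finset.le_sup' (fun n => bS T f n ω)
        (Finset.mem_range.2 (Nat.lt_succ_self n)))⟩
  have := tendsto_setIntegral_of_monotone hEmeas hEmono hfint.integrableOn
  rw [hEunion] at this
  exact ge_of_tendsto' this hstep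

/-- **Maximal ergodic inequality**. -/
lemma maximal_ineq (hT : MeasurePreserving T μ μ) {h : Ω → ℝ} (hmeas : Measurable h)
    (h01 : ∀ ω, h ω ∈ Set.Icc (0:ℝ) 1) {c : ℝ} (hc : 0 < c) :
    c * (μ {ω | ∃ n : ℕ, (n : ℝ) * c < bS T h n ω}).toReal ≤ ∫ ω, h ω ∂μ := by
  set f : Ω → ℝ := fun ω => h ω - c with hf
  have hfm : Measurable f := hmeas.sub measurable_const
  have hfb : ∀ ω, |f ω| ≤ 1 + c := by
    intro ω
    rcases h01 ω with ⟨h0, h1⟩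
    rw [abs_le]; constructor <;> simp only [hf] <;> linarith
  have hbs : ∀ n ω, bS T f n ω = bS T h n ω - n * c := by
    intro n ω
    simp only [bS, hf, Finset.sum_sub_distrib, Finset.sum_const, Finset.card_range,
      nsmul_eq_mul]
  have hEeq : {ω | ∃ n, 0 < bS T f n ω} = {ω | ∃ n : ℕ, (n : ℝ) * c < bS T h n ω} := by
    ext ω
    simp only [Set.mem_setOf_eq, hbs, sub_pos]
  have hME := maximal_ergodic μ hT hfm hfb
  rw [hEeq] at hME
  set E := {ω | ∃ n : ℕ, (n : ℝ) * c < bS T h n ω} with hE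
  have hhint : Integrable h μ := integrable_of_bdd (C := 1) μ hmeas
    (fun ω => by rcases h01 ω with ⟨h0, h1⟩; rw [abs_le]; constructor <;> linarith)
  have hsplit : ∫ ω in E, f ω ∂μ = ∫ ω in E, h ω ∂μ - (μ E).toReal * c := by
    have : ∫ ω in E, f ω ∂μ = ∫ ω in E, h ω ∂μ - ∫ _ω in E, c ∂μ :=
      integral_sub hhint.integrableOn (integrableOn_const (measure_ne_top μ E))
    rw [this, setIntegral_const, smul_eq_mul, measureReal_def]
  have hle : ∫ ω in E, h ω ∂μ ≤ ∫ ω, h ω ∂μ :=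
    setIntegral_le_integral hhint (Filter.Eventually.of_forall fun ω => (h01 ω).1)
  rw [hsplit] at hME
  linarith [hME, hle]

/-- **Breiman-type Cesàro lemma**: if `gₙ → 0` a.e. with `0 ≤ gₙ ≤ 1`, then the Cesàro
averages of `gₙ ∘ Tⁿ` tend to `0` a.e. -/
lemma cesaro_of_tendsto_zero (hT : MeasurePreserving T μ μ) (g : ℕ → Ω → ℝ)
    (hgm : ∀ n, Measurable (g n)) (h01 : ∀ n ω, g n ω ∈ Set.Icc (0:ℝ) 1)
    (hto : ∀ᵐ ω ∂μ, Tendsto (fun n => g n ω) atTop (𝓝 0)) :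
    ∀ᵐ ω ∂μ, Tendsto (fun N : ℕ => (∑ n ∈ Finset.range N, g n (T^[n] ω)) / N)
      atTop (𝓝 0) := by
  classical
  -- the tail suprema
  set h : ℕ → Ω → ℝ := fun m ω => (⨆ n, ENNReal.ofReal (g (m + n) ω)).toReal with hh
  have hsne : ∀ m ω, (⨆ n, ENNReal.ofReal (g (m + n) ω)) ≤ 1 := by
    intro m ω
    exact iSup_le fun n => ENNReal.ofReal_le_one.2 (h01 _ _).2
  have hsnetop : ∀ m ω, (⨆ n, ENNReal.ofReal (g (m + n) ω)) ≠ ⊤ :=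
    fun m ω => ne_top_of_le_ne_top ENNReal.one_ne_top (hsne m ω)
  have hh01 : ∀ m ω, h m ω ∈ Set.Icc (0:ℝ) 1 := by
    intro m ω
    refine ⟨ENNReal.toReal_nonneg, ?_⟩
    have := ENNReal.toReal_mono ENNReal.one_ne_top (hsne m ω)
    simpa using this
  have hhm : ∀ m, Measurable (h m) := by
    intro m
    apply ENNReal.measurable_toReal.comp
    exact Measurable.iSup fun n => ENNReal.measurable_ofReal.comp (hgm (m + n))
  have hdom : ∀ m n ω, m ≤ n → g n ω ≤ h m ω := by
    intro m n ω hmn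
    have h1 : g n ω = (ENNReal.ofReal (g n ω)).toReal :=
      (ENNReal.toReal_ofReal (h01 n ω).1).symm
    rw [h1, hh]
    apply ENNReal.toReal_mono (hsnetop m ω)
    have : n = m + (n - m) := by omega
    rw [this]
    exact le_iSup (fun k => ENNReal.ofReal (g (m + k) ω)) (n - m)
  have hto' : ∀ᵐ ω ∂μ, Tendsto (fun m => h m ω) atTop (𝓝 0) := by
    filter_upwards [hto] with ω hω
    refine tendsto_order.2 ⟨fun a ha => ?_, fun a ha => ?_⟩
    · exact Filter.Eventually.of_forall fun m => lt_of_lt_of_le ha (hh01 m ω).1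
    · have h2 : ∀ᶠ n in atTop, g n ω < a / 2 := by
        have := hω.eventually (gt_mem_nhds (by linarith : (0:ℝ) < a / 2))
        simpa using this
      rcases eventually_atTop.1 h2 with ⟨M, hM⟩
      filter_upwards [eventually_ge_atTop M] with m hm
      have : (⨆ n, ENNReal.ofReal (g (m + n) ω)) ≤ ENNReal.ofReal (a / 2) :=
        iSup_le fun n => ENNReal.ofReal_le_ofReal (hM (m + n) (by omega)).le
      calc h m ω ≤ (ENNReal.ofReal (a / 2)).toReal :=
            ENNReal.toReal_mono ENNReal.ofReal_ne_top this
        _ = a / 2 := ENNReal.toReal_ofReal (by linarith)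
        _ < a := by linarith
  have hint : Tendsto (fun m => ∫ ω, h m ω ∂μ) atTop (𝓝 0) := by
    have h0 : (0:ℝ) = ∫ _ω, (0:ℝ) ∂μ := by simp
    rw [h0]
    apply tendsto_integral_of_dominated_convergence (fun _ => (1:ℝ))
      (fun m => (hhm m).aestronglyMeasurable) (integrable_const 1)
      (fun m => Filter.Eventually.of_forall fun ω => by
        rcases hh01 m ω with ⟨a, b⟩
        simp only [Real.norm_eq_abs, abs_le]; constructor <;> linarith) hto'
  -- the averages
  set Av : ℕ → Ω → ℝ := fun N ω => (∑ n ∈ Finset.range N, g n (T^[n] ω)) / N with hAv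
  have hAv0 : ∀ N ω, 0 ≤ Av N ω := fun N ω =>
    div_nonneg (Finset.sum_nonneg fun n _ => (h01 n _).1) (Nat.cast_nonneg N)
  have hAv1 : ∀ N ω, Av N ω ≤ 1 := by
    intro N ω
    rcases Nat.eq_zero_or_pos N with rfl | hN
    · simp [hAv]
    · rw [hAv, div_le_one (by exact_mod_cast hN)]
      calc (∑ n ∈ Finset.range N, g n (T^[n] ω))
          ≤ ∑ _n ∈ Finset.range N, (1:ℝ) := Finset.sum_le_sum fun n _ => (h01 n _).2
        _ = N := by simp
  set L : Ω → ℝ := fun ω => Filter.limsup (fun N => Av N ω) atTop with hL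
  -- the bad sets
  have hmain : ∀ c : ℝ, 0 < c → ∀ᵐ ω ∂μ, L ω ≤ c := by
    intro c hc
    set Em : ℕ → Set Ω := fun m =>
      {ω | ∃ n : ℕ, (n : ℝ) * (c / 2) < bS T (h m) n ω} with hEm
    have hsub : ∀ m, {ω | c < L ω} ⊆ Em m := by
      intro m ω hω
      by_contra hnot
      simp only [hEm, Set.mem_setOf_eq, not_exists, not_lt] at hnot
      -- then Av N ω ≤ m / N + c / 2 for all N ≥ 1
      have hb : ∀ N : ℕ, 0 < N → Av N ω ≤ m / N + c / 2 := by
        intro N hN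
        have hs : (∑ n ∈ Finset.range N, g n (T^[n] ω))
            ≤ m + bS T (h m) N ω := by
          have : ∀ n ∈ Finset.range N, g n (T^[n] ω)
              ≤ (if n < m then (1:ℝ) else 0) + h m (T^[n] ω) := by
            intro n _
            by_cases hnm : n < m
            · simp only [hnm, if_true]
              linarith [(h01 n (T^[n] ω)).2, (hh01 m (T^[n] ω)).1]
            · simp only [hnm, if_false, zero_add]
              exact hdom m n _ (by omega)
          calc (∑ n ∈ Finset.range N, g n (T^[n] ω))
              ≤ ∑ n ∈ Finset.range N, ((if n < m then (1:ℝ) else 0) + h m (T^[n] ω)) :=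
                Finset.sum_le_sum this
            _ = (∑ n ∈ Finset.range N, (if n < m then (1:ℝ) else 0)) + bS T (h m) N ω := by
                rw [Finset.sum_add_distrib]; rfl
            _ ≤ m + bS T (h m) N ω := by
                have : (∑ n ∈ Finset.range N, (if n < m then (1:ℝ) else 0))
                    = ((Finset.range N).filter (fun n => n < m)).card := by
                  rw [Finset.sum_boole]
                have hcard : ((Finset.range N).filter (fun n => n < m)).card ≤ m := by
                  have : ((Finset.range N).filter (fun n => n < m)) ⊆ Finset.range m := by
                    intro x hx
                    simp only [Finset.mem_filter] at hx
                    exact Finset.mem_range.2 hx.2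
                  simpa using Finset.card_le_card this
                rw [this]
                have : (((Finset.range N).filter (fun n => n < m)).card : ℝ) ≤ m := by
                  exact_mod_cast hcard
                linarith
        rw [hAv]
        have hN' : (0:ℝ) < N := by exact_mod_cast hN
        rw [div_le_iff₀ hN']
        have := hnot N
        calc (∑ n ∈ Finset.range N, g n (T^[n] ω)) ≤ m + bS T (h m) N ω := hs
          _ ≤ m + N * (c / 2) := by linarith
          _ = (m / N + c / 2) * N := by field_simp
      -- hence limsup ≤ c
      have hls : L ω ≤ c := by
        apply Filter.limsup_le_of_le
        · exact Filter.isCoboundedUnder_le_of_le atTop fun N => hAv0 N ω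
        · have h1 : Tendsto (fun N : ℕ => (m : ℝ) / N) atTop (𝓝 0) :=
            tendsto_const_div_atTop_nhds_zero_nat (m : ℝ)
          have h2 : ∀ᶠ N : ℕ in atTop, (m:ℝ) / N ≤ c / 2 :=
            (h1.eventually (ge_mem_nhds (by linarith : (0:ℝ) < c/2))).mono fun N hN => hN
          filter_upwards [h2, eventually_gt_atTop 0] with N hN hN0
          calc Av N ω ≤ m / N + c / 2 := hb N hN0
            _ ≤ c / 2 + c / 2 := by linarith
            _ = c := by ring
      exact absurd hω (not_lt.2 hls)
    have hEmmeas : ∀ m, MeasurableSet (Em m) := by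
      intro m
      have : Em m = ⋃ n : ℕ, {ω | (n : ℝ) * (c / 2) < bS T (h m) n ω} := by
        rw [hEm]; exact Set.setOf_exists _
      rw [this]
      exact MeasurableSet.iUnion fun n =>
        measurableSet_lt measurable_const (bS_measurable hT.measurable (hhm m) n)
    have hbound : ∀ m, (μ {ω | c < L ω}).toReal ≤ (2 / c) * ∫ ω, h m ω ∂μ := by
      intro m
      have h1 := maximal_ineq μ hT (hhm m) (hh01 m) (by linarith : (0:ℝ) < c / 2)
      have h2 : (μ {ω | c < L ω}).toReal ≤ (μ (Em m)).toReal := by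
        apply ENNReal.toReal_mono (measure_ne_top μ _)
        exact measure_mono (hsub m)
      have h3 : (μ (Em m)).toReal ≤ (2 / c) * ∫ ω, h m ω ∂μ := by
        rw [div_mul_eq_mul_div, le_div_iff₀ hc]
        nlinarith [h1]
      linarith
    have h0 : (μ {ω | c < L ω}).toReal = 0 := by
      have hge : 0 ≤ (μ {ω | c < L ω}).toReal := ENNReal.toReal_nonneg
      have hlim : Tendsto (fun m => (2 / c) * ∫ ω, h m ω ∂μ) atTop (𝓝 0) := by
        have := hint.const_mul (2 / c)
        simpa using this
      have := ge_of_tendsto' hlim hbound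
      linarith
    have : μ {ω | c < L ω} = 0 :=
      (ENNReal.toReal_eq_zero_iff _).1 h0 |>.resolve_right (measure_ne_top μ _)
    rw [ae_iff]
    simpa only [not_le] using this
  have hall : ∀ᵐ ω ∂μ, ∀ k : ℕ, L ω ≤ 1 / (k + 1) := by
    rw [ae_all_iff]
    intro k
    exact hmain (1 / (k + 1)) (by positivity)
  filter_upwards [hall] with ω hω
  have hLle : L ω ≤ 0 := by
    apply ge_of_tendsto' tendsto_one_div_add_atTop_nhds_zero_nat
    intro k
    exact_mod_cast hω k
  apply tendsto_of_le_liminf_of_limsup_le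
  · apply Filter.le_liminf_of_le
    · exact Filter.isCoboundedUnder_ge_of_le atTop fun N => hAv1 N ω
    · exact Filter.Eventually.of_forall fun N => hAv0 N ω
  · exact hLle
  · exact ⟨1, Filter.eventually_map.2 (Filter.Eventually.of_forall fun N => hAv1 N ω)⟩
  · exact ⟨0, Filter.eventually_map.2 (Filter.Eventually.of_forall fun N => hAv0 N ω)⟩

end Ergodic


section CondexpComp

variable {Ω : Type*} {m : MeasurableSpace Ω} [m0 : MeasurableSpace Ω] {μ : Measure Ω}
  [IsProbabilityMeasure μ]

lemma integrable_of_bdd' {f : Ω → ℝ} (hf : Measurable f) {C : ℝ} (h : ∀ ω, |f ω| ≤ C) :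
    Integrable f μ := by
  refine Integrable.mono' (integrable_const C) hf.aestronglyMeasurable ?_
  exact Filter.Eventually.of_forall fun ω => by simpa using h ω

/-- Conditional expectation commutes with a measure-preserving map. -/
lemma condexp_comp_measurePreserving {T : Ω → Ω} (hT : MeasurePreserving T μ μ)
    {f : Ω → ℝ} (hf : Measurable f) {C : ℝ} (hC : ∀ ω, |f ω| ≤ C)
    (hm : m ≤ m0) :
    (μ[f|m]) ∘ T =ᵐ[μ] μ[f ∘ T | m.comap T] := by
  have hTm := hT.measurable
  have hm' : m.comap T ≤ m0 := by
    rintro s ⟨t, ht, rfl⟩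
    exact hTm (hm t ht)
  have hfi : Integrable f μ := integrable_of_bdd' hf hC
  have hfTi : Integrable (f ∘ T) μ := (hT.integrable_comp hf.aestronglyMeasurable).2 hfi
  have hcm : AEStronglyMeasurable (μ[f|m]) μ :=
    (stronglyMeasurable_condExp.mono hm).aestronglyMeasurable
  have hci : Integrable ((μ[f|m]) ∘ T) μ :=
    (hT.integrable_comp hcm).2 integrable_condExp
  have hmap := hT.map_eq
  refine ae_eq_condExp_of_forall_setIntegral_eq hm' hfTi
    (fun s _ _ => hci.integrableOn) ?_ ?_
  · rintro s ⟨t, ht, rfl⟩ _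
    have htm := hm t ht
    have h1 : ∫ ω in T ⁻¹' t, (μ[f|m]) (T ω) ∂μ = ∫ y in t, (μ[f|m]) y ∂μ := by
      calc ∫ ω in T ⁻¹' t, (μ[f|m]) (T ω) ∂μ
          = ∫ y in t, (μ[f|m]) y ∂(Measure.map T μ) :=
            (setIntegral_map htm (by rw [hmap]; exact hcm) hTm.aemeasurable).symm
        _ = ∫ y in t, (μ[f|m]) y ∂μ := by rw [hmap]
    have h2 : ∫ ω in T ⁻¹' t, f (T ω) ∂μ = ∫ y in t, f y ∂μ := by
      calc ∫ ω in T ⁻¹' t, f (T ω) ∂μ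
          = ∫ y in t, f y ∂(Measure.map T μ) :=
            (setIntegral_map htm (by rw [hmap]; exact hf.aestronglyMeasurable)
              hTm.aemeasurable).symm
        _ = ∫ y in t, f y ∂μ := by rw [hmap]
    calc ∫ ω in T ⁻¹' t, ((μ[f|m]) ∘ T) ω ∂μ = ∫ y in t, (μ[f|m]) y ∂μ := h1
      _ = ∫ y in t, f y ∂μ := setIntegral_condExp hm hfi ht
      _ = ∫ ω in T ⁻¹' t, (f ∘ T) ω ∂μ := h2.symm
  · refine StronglyMeasurable.aestronglyMeasurable ?_
    exact (stronglyMeasurable_condExp (m := m)).comp_measurable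
      (fun s hs => ⟨s, hs, rfl⟩)

end CondexpComp

section Coord

variable {A : Type*} [MeasurableSpace A]

lemma shiftZ_iterate (n : ℕ) (ω : ℤ → A) (k : ℤ) : (shiftZ^[n] ω) k = ω (k + n) := by
  induction n generalizing ω with
  | zero => simp
  | succ n ih =>
    rw [Function.iterate_succ_apply]
    rw [ih (shiftZ ω)]
    simp only [shiftZ]
    congr 1
    push_cast
    ring

lemma coordSigma_le (s : Set ℤ) :
    coordSigma A s ≤ (inferInstance : MeasurableSpace (ℤ → A)) :=
  iSup₂_le fun k _ => (measurable_pi_apply k).comap_le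

lemma coordSigma_mono {s t : Set ℤ} (h : s ⊆ t) : coordSigma A s ≤ coordSigma A t :=
  biSup_mono h

lemma comap_shiftZ_coordSigma (n : ℕ) (s : Set ℤ) :
    (coordSigma A s).comap (shiftZ^[n]) = coordSigma A ((fun k => k + (n : ℤ)) '' s) := by
  unfold coordSigma
  rw [iSup_image]
  simp only [MeasurableSpace.comap_iSup]
  refine iSup_congr fun k => iSup_congr fun _ => ?_
  rw [MeasurableSpace.comap_comp]
  congr 1
  funext ω
  exact shiftZ_iterate n ω k

end Coord

section Main

variable {A : Type} [Fintype A] [Nonempty A] [DecidableEq A]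
  [MeasurableSpace A] [MeasurableSingletonClass A]

/-- The filtration of the past, `σ(ζ_{-k}, …, ζ_{-1})`. -/
def pastFiltration (A : Type) [MeasurableSpace A] :
    Filtration ℕ (inferInstance : MeasurableSpace (ℤ → A)) where
  seq := fun k => coordSigma A (Set.Icc (-(k : ℤ)) (-1))
  mono' := fun i j hij => coordSigma_mono
    (Set.Icc_subset_Icc (neg_le_neg (by exact_mod_cast hij)) le_rfl)
  le' := fun _ => coordSigma_le _

lemma iSup_pastFiltration :
    (⨆ k, (pastFiltration A) k) = coordSigma A (Set.Iic (-1)) := by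
  apply le_antisymm
  · refine iSup_le fun k => ?_
    show coordSigma A (Set.Icc (-(k : ℤ)) (-1)) ≤ coordSigma A (Set.Iic (-1))
    exact coordSigma_mono Set.Icc_subset_Iic_self
  · refine iSup₂_le fun j hj => ?_
    have hj' : j ≤ -1 := hj
    have habs : (j.natAbs : ℤ) = -j := Int.ofNat_natAbs_of_nonpos (by omega)
    have hjmem : j ∈ Set.Icc (-(j.natAbs : ℤ)) (-1) := ⟨by omega, hj'⟩
    refine le_trans ?_ (le_iSup (fun k => (pastFiltration A) k) j.natAbs)
    show _ ≤ coordSigma A (Set.Icc (-(j.natAbs : ℤ)) (-1))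
    exact le_biSup
      (fun k : ℤ => MeasurableSpace.comap (fun ω : ℤ → A => ω k) inferInstance) hjmem

end Main

/-- For a stationary measure on `A^ℤ`, the one-step predictions of an observer who sees
the process from time `0` onward agree, in the strong Cesàro sense and `μ`-a.s., with
those of an observer who knows the entire infinite past. -/
theorem strong_cesaro_predictions_finite_history
    {A : Type} [Fintype A] [Nonempty A] [DecidableEq A]
    [MeasurableSpace A] [MeasurableSingletonClass A]
    (μ : Measure (ℤ → A)) [IsProbabilityMeasure μ]
    (hstat : MeasurePreserving (shiftZ (A := A)) μ μ) :
    ∀ᵐ ω ∂μ,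
      Tendsto (fun N : ℕ =>
          (∑ n ∈ Finset.range N, ⨆ a : A,
            |condProbCoord μ (coordSigma A (Set.Icc 0 ((n : ℤ) - 1))) n a ω -
              condProbCoord μ (coordSigma A (Set.Iic ((n : ℤ) - 1))) n a ω|) / N)
        atTop (nhds 0) := by
  classical
  have hiter : ∀ n : ℕ, MeasurePreserving (shiftZ (A := A))^[n] μ μ := fun n => hstat.iterate n
  set F : A → (ℤ → A) → ℝ := fun a ω => if ω 0 = a then (1 : ℝ) else 0 with hF
  have hFmeas : ∀ a, Measurable (F a) := by
    intro a
    have hs : MeasurableSet ((fun ω : ℤ → A => ω 0) ⁻¹' {a}) :=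
      (measurable_pi_apply 0) (measurableSet_singleton a)
    exact Measurable.ite hs measurable_const measurable_const
  have hFbd : ∀ a ω, |F a ω| ≤ 1 := by
    intro a ω; by_cases h : ω 0 = a <;> simp [hF, h]
  have hF01 : ∀ a ω, 0 ≤ F a ω ∧ F a ω ≤ 1 := by
    intro a ω; by_cases h : ω 0 = a <;> simp [hF, h]
  set p : ℕ → A → (ℤ → A) → ℝ := fun n a => μ[F a| (pastFiltration A) n] with hp
  set q : A → (ℤ → A) → ℝ := fun a => μ[F a| coordSigma A (Set.Iic (-1))] with hq
  have hIic_le : coordSigma A (Set.Iic (-1 : ℤ)) ≤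
      (inferInstance : MeasurableSpace (ℤ → A)) := coordSigma_le _
  have hpm : ∀ n a, Measurable (p n a) := fun n a =>
    (stronglyMeasurable_condExp.mono ((pastFiltration A).le n)).measurable
  have hqm : ∀ a, Measurable (q a) := fun a =>
    (stronglyMeasurable_condExp.mono hIic_le).measurable
  set G : ℕ → (ℤ → A) → ℝ := fun n ω =>
    Finset.univ.sup' Finset.univ_nonempty (fun a : A => |p n a ω - q a ω|) with hG
  have hGm : ∀ n, Measurable (G n) := by
    intro n
    have h1 := Finset.measurable_sup' (Finset.univ_nonempty (α := A))
      (f := fun (a : A) (ω : ℤ → A) => |p n a ω - q a ω|)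
      (fun a _ => ((hpm n a).sub (hqm a)).abs)
    have h2 : G n = Finset.univ.sup' Finset.univ_nonempty
        (fun (a : A) (ω : ℤ → A) => |p n a ω - q a ω|) :=
      funext fun ω => (Finset.sup'_apply (Finset.univ_nonempty)
        (fun (a : A) (ω : ℤ → A) => |p n a ω - q a ω|) ω).symm
    rw [h2]; exact h1
  set g : ℕ → (ℤ → A) → ℝ := fun n ω => max 0 (min (G n ω) 1) with hg
  have hgm : ∀ n, Measurable (g n) := fun n =>
    measurable_const.max ((hGm n).min measurable_const)
  have hg01 : ∀ n ω, g n ω ∈ Set.Icc (0 : ℝ) 1 :=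
    fun n ω => ⟨le_max_left _ _, max_le zero_le_one (min_le_right _ _)⟩
  -- Lévy's upward theorem
  have hlevy : ∀ a : A, ∀ᵐ ω ∂μ, Tendsto (fun n => p n a ω) atTop (𝓝 (q a ω)) := by
    intro a
    have h := tendsto_ae_condExp (μ := μ) (ℱ := pastFiltration A) (F a)
    rw [iSup_pastFiltration] at h
    exact h
  have hG0 : ∀ᵐ ω ∂μ, Tendsto (fun n => G n ω) atTop (𝓝 0) := by
    have hall : ∀ᵐ ω ∂μ, ∀ a : A, Tendsto (fun n => p n a ω) atTop (𝓝 (q a ω)) :=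
      ae_all_iff.2 hlevy
    filter_upwards [hall] with ω hω
    have hlow : ∀ n, 0 ≤ G n ω := fun n =>
      le_trans (abs_nonneg _) (Finset.le_sup' (fun a : A => |p n a ω - q a ω|)
        (Finset.mem_univ (Classical.arbitrary A)))
    have hup : ∀ n, G n ω ≤ ∑ a : A, |p n a ω - q a ω| := fun n =>
      Finset.sup'_le _ _ fun a _ =>
        Finset.single_le_sum (f := fun a : A => |p n a ω - q a ω|)
          (fun b _ => abs_nonneg _) (Finset.mem_univ a)
    have hsum : Tendsto (fun n => ∑ a : A, |p n a ω - q a ω|) atTop (𝓝 0) := by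
      have h1 : ∀ a : A, Tendsto (fun n => |p n a ω - q a ω|) atTop (𝓝 0) := by
        intro a
        have := ((hω a).sub (tendsto_const_nhds : Tendsto (fun _ : ℕ => q a ω) atTop _)).abs
        simpa using this
      have hs := tendsto_finset_sum Finset.univ (fun (a : A) (_ : a ∈ Finset.univ) => h1 a)
      simpa using hs
    exact squeeze_zero hlow hup hsum
  -- a.e. bounds on `G`
  have hbounds : ∀ (n : ℕ) (a : A),
      ∀ᵐ ω ∂μ, 0 ≤ p n a ω ∧ p n a ω ≤ 1 ∧ 0 ≤ q a ω ∧ q a ω ≤ 1 := by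
    intro n a
    have hFi : Integrable (F a) μ := integrable_of_bdd' (hFmeas a) (hFbd a)
    have h1 : 0 ≤ᵐ[μ] p n a :=
      condExp_nonneg (Eventually.of_forall fun ω => (hF01 a ω).1)
    have h2 : p n a ≤ᵐ[μ] fun _ => (1 : ℝ) := by
      have := condExp_mono (m := (pastFiltration A) n) hFi (integrable_const 1)
        (Eventually.of_forall fun ω => (hF01 a ω).2)
      rwa [condExp_const ((pastFiltration A).le n)] at this
    have h3 : 0 ≤ᵐ[μ] q a :=
      condExp_nonneg (Eventually.of_forall fun ω => (hF01 a ω).1)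
    have h4 : q a ≤ᵐ[μ] fun _ => (1 : ℝ) := by
      have := condExp_mono (m := coordSigma A (Set.Iic (-1))) hFi (integrable_const 1)
        (Eventually.of_forall fun ω => (hF01 a ω).2)
      rwa [condExp_const hIic_le] at this
    filter_upwards [h1, h2, h3, h4] with ω a1 a2 a3 a4
    exact ⟨a1, a2, a3, a4⟩
  have hGg : ∀ n : ℕ, G n =ᵐ[μ] g n := by
    intro n
    have hb : ∀ᵐ ω ∂μ, ∀ a : A, 0 ≤ p n a ω ∧ p n a ω ≤ 1 ∧ 0 ≤ q a ω ∧ q a ω ≤ 1 :=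
      ae_all_iff.2 (hbounds n)
    filter_upwards [hb] with ω hω
    have h0 : 0 ≤ G n ω :=
      le_trans (abs_nonneg _) (Finset.le_sup' (fun a : A => |p n a ω - q a ω|)
        (Finset.mem_univ (Classical.arbitrary A)))
    have h1 : G n ω ≤ 1 := by
      apply Finset.sup'_le
      intro a _
      rcases hω a with ⟨b1, b2, b3, b4⟩
      rw [abs_le]; constructor <;> linarith
    show G n ω = max 0 (min (G n ω) 1)
    rw [min_eq_left h1, max_eq_right h0]
  -- Cesàro averaging
  have hgto : ∀ᵐ ω ∂μ, Tendsto (fun n => g n ω) atTop (𝓝 0) := by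
    filter_upwards [hG0] with ω hω
    have := (tendsto_const_nhds : Tendsto (fun _ : ℕ => (0:ℝ)) atTop _).max
      (hω.min (tendsto_const_nhds : Tendsto (fun _ : ℕ => (1:ℝ)) atTop _))
    simpa using this
  have hces := cesaro_of_tendsto_zero μ hstat g hgm hg01 hgto
  -- identification of the summands
  have hid : ∀ (n : ℕ) (a : A),
      condProbCoord μ (coordSigma A (Set.Icc 0 ((n : ℤ) - 1))) n a
        =ᵐ[μ] (p n a) ∘ ((shiftZ (A := A))^[n])
      ∧ condProbCoord μ (coordSigma A (Set.Iic ((n : ℤ) - 1))) n a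
        =ᵐ[μ] (q a) ∘ ((shiftZ (A := A))^[n]) := by
    intro n a
    have hcomp : F a ∘ ((shiftZ (A := A))^[n]) = fun ω => if ω n = a then (1 : ℝ) else 0 := by
      funext ω
      simp only [Function.comp_apply, hF]
      rw [shiftZ_iterate n ω 0, zero_add]
    have hIcc : (coordSigma A (Set.Icc (-(n : ℤ)) (-1))).comap ((shiftZ (A := A))^[n])
        = coordSigma A (Set.Icc 0 ((n : ℤ) - 1)) := by
      have e1 : -(n : ℤ) + (n : ℤ) = 0 := by omega
      have e2 : (-1 : ℤ) + (n : ℤ) = (n : ℤ) - 1 := by omega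
      rw [comap_shiftZ_coordSigma, Set.image_add_const_Icc, e1, e2]
    have hIic : (coordSigma A (Set.Iic (-1 : ℤ))).comap ((shiftZ (A := A))^[n])
        = coordSigma A (Set.Iic ((n : ℤ) - 1)) := by
      have e2 : (-1 : ℤ) + (n : ℤ) = (n : ℤ) - 1 := by omega
      rw [comap_shiftZ_coordSigma, Set.image_add_const_Iic, e2]
    constructor
    · have h := condexp_comp_measurePreserving (hiter n) (hFmeas a) (hFbd a)
        (coordSigma_le (Set.Icc (-(n : ℤ)) (-1)))
      rw [hcomp, hIcc] at h
      exact h.symm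
    · have h := condexp_comp_measurePreserving (hiter n) (hFmeas a) (hFbd a) hIic_le
      rw [hcomp, hIic] at h
      exact h.symm
  -- transporting the a.e. identity `G = g` along the shift
  have hae2 : ∀ n : ℕ, (fun ω => G n ((shiftZ (A := A))^[n] ω))
      =ᵐ[μ] fun ω => g n ((shiftZ (A := A))^[n] ω) := by
    intro n
    have h : G n =ᵐ[μ.map ((shiftZ (A := A))^[n])] g n := by
      rw [(hiter n).map_eq]; exact hGg n
    exact MeasureTheory.ae_eq_comp (hiter n).measurable.aemeasurable h
  have hmaster : ∀ᵐ ω ∂μ, ∀ n : ℕ,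
      (⨆ a : A, |condProbCoord μ (coordSigma A (Set.Icc 0 ((n : ℤ) - 1))) n a ω -
        condProbCoord μ (coordSigma A (Set.Iic ((n : ℤ) - 1))) n a ω|)
        = g n ((shiftZ (A := A))^[n] ω) := by
    rw [ae_all_iff]
    intro n
    have h1 : ∀ᵐ ω ∂μ, ∀ a : A,
        condProbCoord μ (coordSigma A (Set.Icc 0 ((n : ℤ) - 1))) n a ω
          = p n a ((shiftZ (A := A))^[n] ω)
        ∧ condProbCoord μ (coordSigma A (Set.Iic ((n : ℤ) - 1))) n a ω
          = q a ((shiftZ (A := A))^[n] ω) := by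
      rw [ae_all_iff]
      intro a
      filter_upwards [(hid n a).1, (hid n a).2] with ω e1 e2
      exact ⟨e1, e2⟩
    filter_upwards [h1, hae2 n] with ω hω hgG
    have hpt : ∀ a : A,
        |condProbCoord μ (coordSigma A (Set.Icc 0 ((n : ℤ) - 1))) n a ω -
          condProbCoord μ (coordSigma A (Set.Iic ((n : ℤ) - 1))) n a ω|
        = |p n a ((shiftZ (A := A))^[n] ω) - q a ((shiftZ (A := A))^[n] ω)| := by
      intro a; rw [(hω a).1, (hω a).2]
    calc (⨆ a : A, |condProbCoord μ (coordSigma A (Set.Icc 0 ((n : ℤ) - 1))) n a ω -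
          condProbCoord μ (coordSigma A (Set.Iic ((n : ℤ) - 1))) n a ω|)
        = ⨆ a : A, |p n a ((shiftZ (A := A))^[n] ω) - q a ((shiftZ (A := A))^[n] ω)| :=
          iSup_congr hpt
      _ = G n ((shiftZ (A := A))^[n] ω) := (Finset.sup'_univ_eq_ciSup _).symm
      _ = g n ((shiftZ (A := A))^[n] ω) := hgG
  filter_upwards [hces, hmaster] with ω h1 h2
  refine h1.congr fun N => ?_
  congr 1
  exact Finset.sum_congr rfl fun n _ => (h2 n).symm
end

section
/- Let μ̃, μ be probability measures on A^ℕ (A finite) such that μ̃ weakly merges with μ. Fix a finite decision set D and a payoff function r : A × D → [0,1]. For every ε > 0 there exists N_0 such that for every N > N_0, every strategy f* that is optimal for the N-period average payoff under μ̃ is ε-optimal for the N-period average payoff under μ; that is, V_N^μ(f) ≤ V_N^μ(f*) + ε for every strategy f, where V_N^ν(f) = (1/N)·E_ν[∑_{n=0}^{N-1} r(a_n, f(a_0,…,a_{n-1}))]. -/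
open MeasureTheory Filter

/-- The one-step predictive probability `ν(ζ_n = a | a_0, …, a_{n-1})` of the measure
`ν` along the realization `ω`. -/
noncomputable def pred {A : Type*} [MeasurableSpace A] (ν : Measure (ℕ → A))
    (ω : ℕ → A) (n : ℕ) (a : A) : ℝ :=
  (ν {ω' | (∀ k < n, ω' k = ω k) ∧ ω' n = a}).toReal /
    (ν {ω' | ∀ k < n, ω' k = ω k}).toReal

/-- The expected average payoff over the first `N` periods under belief `ν`, payoff
function `r` and strategy `f` (a strategy assigns a decision to each finite history). -/
noncomputable def avgPayoff {A : Type*} [MeasurableSpace A] {D : Type*}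
    (ν : Measure (ℕ → A)) (r : A → D → ℝ) (N : ℕ)
    (f : ∀ n : ℕ, (Fin n → A) → D) : ℝ :=
  (∫ ω, (∑ n ∈ Finset.range N, r (ω n) (f n fun k => ω k.val)) ∂ν) / N

section WMaux

set_option linter.unusedSectionVars false

variable {A : Type} [Fintype A] [Nonempty A] [MeasurableSpace A] [MeasurableSingletonClass A]

/-- projection onto first n coordinates -/
def proj (n : ℕ) : (ℕ → A) → (Fin n → A) := fun ω k => ω k.val

lemma measurable_proj (n : ℕ) : Measurable (proj (A := A) n) :=
  measurable_pi_lambda _ fun k => measurable_pi_apply k.val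

/-- weight of a cylinder -/
noncomputable def PW (ν : Measure (ℕ → A)) (n : ℕ) (y : Fin n → A) : ℝ :=
  (ν (proj n ⁻¹' {y})).toReal

noncomputable def qW (ν : Measure (ℕ → A)) (n : ℕ) (y : Fin n → A) (a : A) : ℝ :=
  PW ν (n + 1) (Fin.snoc y a) / PW ν n y

lemma measurableSet_cyl (ν : Measure (ℕ → A)) (n : ℕ) (y : Fin n → A) :
    MeasurableSet (proj (A := A) n ⁻¹' {y}) :=
  (measurable_proj n) (MeasurableSet.singleton y)

lemma PW_nonneg (ν : Measure (ℕ → A)) (n : ℕ) (y : Fin n → A) : 0 ≤ PW ν n y :=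
  ENNReal.toReal_nonneg

lemma snoc_preimage_subset (ν : Measure (ℕ → A)) (n : ℕ) (y : Fin n → A) (a : A) :
    proj (A := A) (n+1) ⁻¹' {Fin.snoc y a} ⊆ proj n ⁻¹' {y} := by
  intro ω hω
  simp only [Set.mem_preimage, Set.mem_singleton_iff] at *
  funext k
  have := congrFun hω k.castSucc
  simpa [proj, Fin.snoc_castSucc] using this

lemma PW_snoc_le (ν : Measure (ℕ → A)) [IsProbabilityMeasure ν] (n : ℕ) (y : Fin n → A) (a : A) :
    PW ν (n+1) (Fin.snoc y a) ≤ PW ν n y := by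
  apply ENNReal.toReal_mono (measure_ne_top ν _)
  exact measure_mono (snoc_preimage_subset ν n y a)

lemma qW_nonneg (ν : Measure (ℕ → A)) (n : ℕ) (y : Fin n → A) (a : A) : 0 ≤ qW ν n y a :=
  div_nonneg (PW_nonneg _ _ _) (PW_nonneg _ _ _)

lemma qW_le_one (ν : Measure (ℕ → A)) [IsProbabilityMeasure ν] (n : ℕ) (y : Fin n → A) (a : A) :
    qW ν n y a ≤ 1 :=
  div_le_one_of_le₀ (PW_snoc_le ν n y a) (PW_nonneg _ _ _)

lemma qW_eq_zero (ν : Measure (ℕ → A)) [IsProbabilityMeasure ν] {n : ℕ} {y : Fin n → A}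
    (h : PW ν n y = 0) (a : A) : qW ν n y a = 0 := by
  have h0 : PW ν (n+1) (Fin.snoc y a) = 0 :=
    le_antisymm (h ▸ PW_snoc_le ν n y a) (PW_nonneg _ _ _)
  simp [qW, h0]

lemma PW_chain (ν : Measure (ℕ → A)) [IsProbabilityMeasure ν] (n : ℕ) (y : Fin n → A) (a : A) :
    PW ν (n+1) (Fin.snoc y a) = PW ν n y * qW ν n y a := by
  rcases eq_or_ne (PW ν n y) 0 with h | h
  · rw [h, zero_mul]
    exact le_antisymm (h ▸ PW_snoc_le ν n y a) (PW_nonneg _ _ _)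
  · rw [qW, mul_div_cancel₀ _ h]

/-- cylinder partition by next coordinate -/
lemma PW_sum_snoc (ν : Measure (ℕ → A)) [IsProbabilityMeasure ν] (n : ℕ) (y : Fin n → A) :
    ∑ a : A, PW ν (n+1) (Fin.snoc y a) = PW ν n y := by
  have hU : proj (A := A) n ⁻¹' {y} = ⋃ a ∈ (Finset.univ : Finset A),
      proj (A := A) (n+1) ⁻¹' {Fin.snoc y a} := by
    ext ω
    simp only [Set.mem_preimage, Set.mem_singleton_iff, Finset.mem_univ, Set.mem_iUnion,
      exists_true_left, true_and]
    constructor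
    · intro h
      refine ⟨ω n, ?_⟩
      funext k
      refine Fin.lastCases ?_ (fun i => ?_) k
      · simp [proj, Fin.snoc_last]
      · simp only [proj, Fin.snoc_castSucc]
        exact congrFun h i
    · rintro ⟨a, ha⟩
      funext k
      have := congrFun ha k.castSucc
      simpa [proj, Fin.snoc_castSucc] using this
  have hdisj : (↑(Finset.univ : Finset A) : Set A).PairwiseDisjoint
      (fun a => proj (A := A) (n+1) ⁻¹' {Fin.snoc y a}) := by
    intro a _ b _ hab
    simp only [Function.onFun, Set.disjoint_left]
    intro ω h1 h2
    simp only [Set.mem_preimage, Set.mem_singleton_iff] at h1 h2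
    apply hab
    have e1 := congrFun h1 (Fin.last n); have e2 := congrFun h2 (Fin.last n)
    rw [Fin.snoc_last] at e1 e2
    rw [← e1, ← e2]
  have hm := measure_biUnion_finset (μ := ν) hdisj
    (fun a _ => measurableSet_cyl ν (n+1) (Fin.snoc y a))
  rw [show PW ν n y = (ν (proj (A := A) n ⁻¹' {y})).toReal from rfl, hU, hm,
    ENNReal.toReal_sum (fun a _ => measure_ne_top ν _)]
  rfl

lemma qW_sum_le_one (ν : Measure (ℕ → A)) [IsProbabilityMeasure ν] (n : ℕ) (y : Fin n → A) :
    ∑ a : A, qW ν n y a ≤ 1 := by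
  rcases eq_or_ne (PW ν n y) 0 with h | h
  · simp [qW_eq_zero ν h]
  · simp only [qW]
    rw [show ∑ a : A, PW ν (n+1) (Fin.snoc y a) / PW ν n y
        = (∑ a : A, PW ν (n+1) (Fin.snoc y a)) / PW ν n y from (Finset.sum_div _ _ _).symm,
      PW_sum_snoc, div_self h]

set_option linter.unusedSectionVars false

lemma cyl_eq (n : ℕ) (ω : ℕ → A) :
    {ω' : ℕ → A | ∀ k < n, ω' k = ω k} = proj n ⁻¹' {proj n ω} := by
  ext ω'
  simp only [Set.mem_setOf_eq, Set.mem_preimage, Set.mem_singleton_iff, funext_iff]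
  constructor
  · intro h k; exact h k.val k.isLt
  · intro h k hk; exact h ⟨k, hk⟩

lemma cyl_snoc_eq (n : ℕ) (ω : ℕ → A) (a : A) :
    {ω' : ℕ → A | (∀ k < n, ω' k = ω k) ∧ ω' n = a}
      = proj (n+1) ⁻¹' {Fin.snoc (proj n ω) a} := by
  ext ω'
  simp only [Set.mem_setOf_eq, Set.mem_preimage, Set.mem_singleton_iff, funext_iff]
  constructor
  · rintro ⟨h1, h2⟩ k
    refine Fin.lastCases ?_ (fun i => ?_) k
    · simpa [proj, Fin.snoc_last] using h2
    · simpa [proj, Fin.snoc_castSucc] using h1 i.val i.isLt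
  · intro h
    constructor
    · intro k hk
      have h2 := h (Fin.castSucc ⟨k, hk⟩)
      rw [Fin.snoc_castSucc] at h2
      exact h2
    · simpa [proj, Fin.snoc_last] using h (Fin.last n)

lemma pred_eq (ν : Measure (ℕ → A)) (ω : ℕ → A) (n : ℕ) (a : A) :
    pred ν ω n a = qW ν n (proj n ω) a := by
  rw [pred, qW, PW, PW, cyl_eq, cyl_snoc_eq]

lemma comp_eq_sum_ind (n : ℕ) (g : (Fin n → A) → ℝ) (ω : ℕ → A) :
    g (proj n ω) = ∑ y : Fin n → A, (proj n ⁻¹' {y}).indicator (fun _ => g y) ω := by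
  rw [Finset.sum_eq_single (proj n ω)]
  · simp [Set.indicator_of_mem]
  · intro y _ hy
    apply Set.indicator_of_notMem
    simp [Ne.symm hy]
  · simp

lemma WM_integrable_comp (ν : Measure (ℕ → A)) [IsProbabilityMeasure ν] (n : ℕ)
    (g : (Fin n → A) → ℝ) : Integrable (fun ω => g (proj n ω)) ν := by
  rw [show (fun ω => g (proj n ω)) = fun ω =>
      ∑ y : Fin n → A, (proj n ⁻¹' {y}).indicator (fun _ => g y) ω from
    funext fun ω => comp_eq_sum_ind n g ω]
  exact integrable_finset_sum _ fun y _ =>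
    (integrable_const (g y)).indicator (measurableSet_cyl ν n y)

lemma WM_integral_comp (ν : Measure (ℕ → A)) [IsProbabilityMeasure ν] (n : ℕ)
    (g : (Fin n → A) → ℝ) :
    ∫ ω, g (proj n ω) ∂ν = ∑ y : Fin n → A, PW ν n y * g y := by
  rw [show (fun ω => g (proj n ω)) = fun ω =>
      ∑ y : Fin n → A, (proj n ⁻¹' {y}).indicator (fun _ => g y) ω from
    funext fun ω => comp_eq_sum_ind n g ω]
  rw [integral_finset_sum _ fun y _ =>
    (integrable_const (g y)).indicator (measurableSet_cyl ν n y)]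
  refine Finset.sum_congr rfl fun y _ => ?_
  rw [integral_indicator_const _ (measurableSet_cyl ν n y), smul_eq_mul, PW, Measure.real]

/-- reindexing a sum over `Fin (n+1) → A` via `snoc` -/
lemma sum_snoc_reindex (n : ℕ) (G : (Fin (n+1) → A) → ℝ) :
    ∑ x : Fin (n+1) → A, G x = ∑ y : Fin n → A, ∑ a : A, G (Fin.snoc y a) := by
  have h1 : ∑ x : Fin (n+1) → A, G x
      = ∑ p : A × (Fin n → A), G ((Fin.snocEquiv (fun _ => A)) p) :=
    (Equiv.sum_comp (Fin.snocEquiv (fun _ => A)) G).symm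
  rw [h1, Fintype.sum_prod_type, Finset.sum_comm]
  refine Finset.sum_congr rfl fun y _ => Finset.sum_congr rfl fun a _ => ?_
  simp [Fin.snocEquiv]

lemma step_eq (ν : Measure (ℕ → A)) [IsProbabilityMeasure ν] {D : Type}
    (r : A → D → ℝ) (n : ℕ) (g : (Fin n → A) → D) :
    ∫ ω, r (ω n) (g (proj n ω)) ∂ν
      = ∑ y : Fin n → A, PW ν n y * ∑ a : A, qW ν n y a * r a (g y) := by
  have hfun : (fun ω : ℕ → A => r (ω n) (g (proj n ω)))
      = fun ω => (fun x : Fin (n+1) → A => r (x (Fin.last n)) (g (Fin.init x))) (proj (n+1) ω) := by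
    funext ω
    congr 1
  rw [hfun, WM_integral_comp ν (n+1) (fun x => r (x (Fin.last n)) (g (Fin.init x))),
    sum_snoc_reindex n
    (fun x => PW ν (n+1) x * r (x (Fin.last n)) (g (Fin.init x)))]
  refine Finset.sum_congr rfl fun y _ => ?_
  rw [Finset.mul_sum]
  refine Finset.sum_congr rfl fun a _ => ?_
  rw [Fin.snoc_last, Fin.init_snoc, PW_chain]
  ring

lemma avg_eq (ν : Measure (ℕ → A)) [IsProbabilityMeasure ν] {D : Type}
    (r : A → D → ℝ) (N : ℕ) (f : ∀ n : ℕ, (Fin n → A) → D) :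
    avgPayoff ν r N f
      = (∑ n ∈ Finset.range N, ∑ y : Fin n → A,
          PW ν n y * ∑ a : A, qW ν n y a * r a (f n y)) / N := by
  rw [avgPayoff]
  congr 1
  rw [integral_finset_sum _ (fun n _ => ?_)]
  · exact Finset.sum_congr rfl fun n _ => step_eq ν r n (f n)
  · have hfun : (fun ω : ℕ → A => r (ω n) (f n fun k => ω k.val))
        = fun ω => (fun x : Fin (n+1) → A => r (x (Fin.last n)) (f n (Fin.init x))) (proj (n+1) ω) := by
      funext ω
      congr 1
    rw [hfun]
    exact WM_integrable_comp ν (n+1) (fun x => r (x (Fin.last n)) (f n (Fin.init x)))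

variable (μt μ : Measure (ℕ → A)) [IsProbabilityMeasure μt] [IsProbabilityMeasure μ]

/-- sup-norm gap of predictives at history `y` -/
noncomputable def Gs (n : ℕ) (y : Fin n → A) : ℝ :=
  ⨆ a : A, |qW μt n y a - qW μ n y a|

lemma Gs_nonneg (n : ℕ) (y : Fin n → A) : 0 ≤ Gs μt μ n y := by
  rw [Gs]
  exact (abs_nonneg (qW μt n y (Classical.arbitrary A) - qW μ n y (Classical.arbitrary A))).trans
    (le_ciSup (f := fun a : A => |qW μt n y a - qW μ n y a|)
      (Finite.bddAbove_range _) (Classical.arbitrary A))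

lemma Gs_le_one (n : ℕ) (y : Fin n → A) : Gs μt μ n y ≤ 1 := by
  rw [Gs]
  refine ciSup_le fun a => ?_
  rw [abs_sub_le_iff]
  constructor
  · linarith [qW_le_one μt n y a, qW_nonneg μ n y a]
  · linarith [qW_le_one μ n y a, qW_nonneg μt n y a]

lemma sum_abs_le_card_Gs (n : ℕ) (y : Fin n → A) :
    ∑ a : A, |qW μt n y a - qW μ n y a| ≤ (Fintype.card A : ℝ) * Gs μt μ n y := by
  calc ∑ a : A, |qW μt n y a - qW μ n y a| ≤ ∑ _a : A, Gs μt μ n y := by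
        refine Finset.sum_le_sum fun a _ => ?_
        rw [Gs]
        exact le_ciSup (f := fun a : A => |qW μt n y a - qW μ n y a|)
          (Finite.bddAbove_range _) a
    _ = (Fintype.card A : ℝ) * Gs μt μ n y := by
        rw [Finset.sum_const, Finset.card_univ, nsmul_eq_mul]

lemma F_eq (N : ℕ) (ω : ℕ → A) :
    (∑ n ∈ Finset.range N, ⨆ a : A, |pred μt ω n a - pred μ ω n a|) / N
      = (∑ n ∈ Finset.range N, Gs μt μ n (proj n ω)) / N := by
  congr 1
  refine Finset.sum_congr rfl fun n _ => ?_
  rw [Gs]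
  congr 1
  funext a
  rw [pred_eq, pred_eq]

lemma integrable_Gs_comp (n : ℕ) : Integrable (fun ω => Gs μt μ n (proj n ω)) μ :=
  WM_integrable_comp μ n (Gs μt μ n)

lemma delta_tendsto
    (hweak : ∀ᵐ ω ∂μ,
      Tendsto (fun N : ℕ =>
          (∑ n ∈ Finset.range N, ⨆ a : A, |pred μt ω n a - pred μ ω n a|) / N)
        atTop (nhds 0)) :
    Tendsto (fun N : ℕ => (∑ n ∈ Finset.range N,
        ∑ y : Fin n → A, PW μ n y * Gs μt μ n y) / N) atTop (nhds 0) := by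
  have key : Tendsto (fun N : ℕ =>
      ∫ ω, (∑ n ∈ Finset.range N, Gs μt μ n (proj n ω)) / N ∂μ) atTop (nhds 0) := by
    have h0 : (0 : ℝ) = ∫ _ω, (0 : ℝ) ∂μ := by simp
    rw [h0]
    refine tendsto_integral_of_dominated_convergence (fun _ => (1 : ℝ)) ?_ ?_ ?_ ?_
    · intro N
      refine Measurable.aestronglyMeasurable ?_
      exact Measurable.div_const (Finset.measurable_sum _ fun n _ =>
        (measurable_of_countable (Gs μt μ n)).comp (measurable_proj n)) N
    · exact integrable_const 1
    · intro N
      refine Eventually.of_forall fun ω => ?_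
      rw [Real.norm_eq_abs, abs_div, abs_of_nonneg (Finset.sum_nonneg fun n _ => Gs_nonneg μt μ n _),
        Nat.abs_cast]
      rcases Nat.eq_zero_or_pos N with hN | hN
      · simp [hN]
      · rw [div_le_one (by positivity)]
        calc ∑ n ∈ Finset.range N, Gs μt μ n (proj n ω)
            ≤ ∑ _n ∈ Finset.range N, (1 : ℝ) :=
              Finset.sum_le_sum fun n _ => Gs_le_one μt μ n _
          _ = N := by simp
    · filter_upwards [hweak] with ω hω
      refine hω.congr fun N => ?_
      exact F_eq μt μ N ω
  refine key.congr fun N => ?_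
  rw [integral_div, integral_finset_sum _ fun n _ => integrable_Gs_comp μt μ n]
  congr 1
  exact Finset.sum_congr rfl fun n _ => WM_integral_comp μ n (Gs μt μ n)

lemma opt_pointwise {D : Type} (r : A → D → ℝ) (N : ℕ) (hN : 0 < N)
    (fstar : ∀ n : ℕ, (Fin n → A) → D)
    (hopt : ∀ f : ∀ n : ℕ, (Fin n → A) → D, avgPayoff μt r N f ≤ avgPayoff μt r N fstar)
    {n : ℕ} (hn : n ∈ Finset.range N) (y : Fin n → A) (d : D) :
    PW μt n y * ∑ a : A, qW μt n y a * r a d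
      ≤ PW μt n y * ∑ a : A, qW μt n y a * r a (fstar n y) := by
  classical
  set f' : ∀ m : ℕ, (Fin m → A) → D :=
    Function.update fstar n (Function.update (fstar n) y d) with hf'
  have h := hopt f'
  rw [avg_eq, avg_eq] at h
  have hNpos : (0:ℝ) < N := Nat.cast_pos.mpr hN
  have h2 : ∑ m ∈ Finset.range N, ∑ z : Fin m → A,
        PW μt m z * ∑ a : A, qW μt m z a * r a (f' m z)
      ≤ ∑ m ∈ Finset.range N, ∑ z : Fin m → A,
        PW μt m z * ∑ a : A, qW μt m z a * r a (fstar m z) := by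
    have := mul_le_mul_of_nonneg_right h hNpos.le
    rwa [div_mul_cancel₀ _ hNpos.ne', div_mul_cancel₀ _ hNpos.ne'] at this
  have hdiff : (∑ m ∈ Finset.range N, ∑ z : Fin m → A,
        PW μt m z * ∑ a : A, qW μt m z a * r a (fstar m z))
      - (∑ m ∈ Finset.range N, ∑ z : Fin m → A,
        PW μt m z * ∑ a : A, qW μt m z a * r a (f' m z))
      = PW μt n y * ((∑ a : A, qW μt n y a * r a (fstar n y))
          - ∑ a : A, qW μt n y a * r a d) := by
    rw [← Finset.sum_sub_distrib]
    rw [Finset.sum_eq_single_of_mem n hn]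
    · rw [← Finset.sum_sub_distrib, Finset.sum_eq_single_of_mem y (Finset.mem_univ y)]
      · have hy : f' n y = d := by
          rw [hf', Function.update_self, Function.update_self]
        rw [hy]; ring
      · intro z _ hz
        have hz' : f' n z = fstar n z := by
          rw [hf', Function.update_self, Function.update_of_ne hz]
        rw [hz', sub_self]
    · intro m _ hm
      have hm' : f' m = fstar m := Function.update_of_ne hm _ _
      rw [hm', sub_self]
  linarith

theorem main_thm
    (hweak : ∀ᵐ ω ∂μ,
      Tendsto (fun N : ℕ =>
          (∑ n ∈ Finset.range N, ⨆ a : A, |pred μt ω n a - pred μ ω n a|) / N)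
        atTop (nhds 0)) :
    ∀ ε > (0 : ℝ), ∃ N₀ : ℕ, ∀ N > N₀,
      ∀ (D : Type) (_ : Fintype D) (_ : Nonempty D) (r : A → D → ℝ),
        (∀ a d, r a d ∈ Set.Icc (0 : ℝ) 1) →
        ∀ fstar : ∀ n : ℕ, (Fin n → A) → D,
          (∀ f : ∀ n : ℕ, (Fin n → A) → D, avgPayoff μt r N f ≤ avgPayoff μt r N fstar) →
          ∀ f : ∀ n : ℕ, (Fin n → A) → D,
            avgPayoff μ r N f ≤ avgPayoff μ r N fstar + ε := by
  intro ε hε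
  have hcA : (0:ℝ) < (Fintype.card A : ℝ) := by
    have := Fintype.card_pos (α := A)
    positivity
  obtain ⟨N₀, hN₀⟩ := Metric.tendsto_atTop.mp (delta_tendsto μt μ hweak)
    (ε / (2 * (Fintype.card A : ℝ))) (by positivity)
  refine ⟨N₀, fun N hNgt D _ _ r hr fstar hopt f => ?_⟩
  have hN : 0 < N := Nat.pos_of_ne_zero (by omega)
  have hNpos : (0:ℝ) < N := Nat.cast_pos.mpr hN
  set X : ℝ := ∑ n ∈ Finset.range N, ∑ y : Fin n → A, PW μ n y * Gs μt μ n y with hX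
  have hδlt : X / N < ε / (2 * (Fintype.card A : ℝ)) := by
    have := hN₀ N (le_of_lt hNgt)
    rw [Real.dist_eq, sub_zero] at this
    exact lt_of_abs_lt this
  set E : ℝ := ∑ n ∈ Finset.range N, ∑ y : Fin n → A,
      PW μ n y * ∑ a : A, |qW μt n y a - qW μ n y a| with hE
  have hEX : E ≤ (Fintype.card A : ℝ) * X := by
    rw [hE, hX, Finset.mul_sum]
    refine Finset.sum_le_sum fun n _ => ?_
    rw [Finset.mul_sum]
    refine Finset.sum_le_sum fun y _ => ?_
    rw [← mul_assoc, mul_comm (Fintype.card A : ℝ) (PW μ n y), mul_assoc]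
    exact mul_le_mul_of_nonneg_left (sum_abs_le_card_Gs μt μ n y) (PW_nonneg _ _ _)
  -- the three key inequalities
  have key1 : ∀ g : ∀ n : ℕ, (Fin n → A) → D,
      ∑ n ∈ Finset.range N, ∑ y : Fin n → A,
          PW μ n y * ∑ a : A, qW μ n y a * r a (g n y)
        ≤ (∑ n ∈ Finset.range N, ∑ y : Fin n → A,
          PW μ n y * ∑ a : A, qW μt n y a * r a (g n y)) + E := by
    intro g
    rw [hE, ← Finset.sum_add_distrib]
    refine Finset.sum_le_sum fun n _ => ?_
    rw [← Finset.sum_add_distrib]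
    refine Finset.sum_le_sum fun y _ => ?_
    rw [← mul_add]
    refine mul_le_mul_of_nonneg_left ?_ (PW_nonneg _ _ _)
    rw [← Finset.sum_add_distrib]
    refine Finset.sum_le_sum fun a _ => ?_
    have h1 := le_abs_self (qW μ n y a - qW μt n y a)
    have h2 := abs_sub_comm (qW μ n y a) (qW μt n y a)
    have hr1 := (hr a (g n y)).1
    have hr2 := (hr a (g n y)).2
    have habs := abs_nonneg (qW μt n y a - qW μ n y a)
    nlinarith [le_abs_self (qW μ n y a - qW μt n y a)]
  have key2 : ∑ n ∈ Finset.range N, ∑ y : Fin n → A,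
          PW μ n y * ∑ a : A, qW μt n y a * r a (fstar n y)
        ≤ (∑ n ∈ Finset.range N, ∑ y : Fin n → A,
          PW μ n y * ∑ a : A, qW μ n y a * r a (fstar n y)) + E := by
    rw [hE, ← Finset.sum_add_distrib]
    refine Finset.sum_le_sum fun n _ => ?_
    rw [← Finset.sum_add_distrib]
    refine Finset.sum_le_sum fun y _ => ?_
    rw [← mul_add]
    refine mul_le_mul_of_nonneg_left ?_ (PW_nonneg _ _ _)
    rw [← Finset.sum_add_distrib]
    refine Finset.sum_le_sum fun a _ => ?_
    have hr1 := (hr a (fstar n y)).1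
    have hr2 := (hr a (fstar n y)).2
    have habs := abs_nonneg (qW μt n y a - qW μ n y a)
    nlinarith [le_abs_self (qW μt n y a - qW μ n y a)]
  have key3 : ∑ n ∈ Finset.range N, ∑ y : Fin n → A,
          PW μ n y * ∑ a : A, qW μt n y a * r a (f n y)
        ≤ ∑ n ∈ Finset.range N, ∑ y : Fin n → A,
          PW μ n y * ∑ a : A, qW μt n y a * r a (fstar n y) := by
    refine Finset.sum_le_sum fun n hn => Finset.sum_le_sum fun y _ => ?_
    rcases eq_or_ne (PW μt n y) 0 with h0 | h0
    · simp [qW_eq_zero μt h0]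
    · have hpos : 0 < PW μt n y := lt_of_le_of_ne (PW_nonneg _ _ _) (Ne.symm h0)
      have hop := opt_pointwise μt r N hN fstar hopt hn y (f n y)
      have hinner : ∑ a : A, qW μt n y a * r a (f n y)
          ≤ ∑ a : A, qW μt n y a * r a (fstar n y) :=
        le_of_mul_le_mul_left (by linarith) hpos
      exact mul_le_mul_of_nonneg_left hinner (PW_nonneg _ _ _)
  rw [avg_eq, avg_eq]
  have chain : ∑ n ∈ Finset.range N, ∑ y : Fin n → A,
        PW μ n y * ∑ a : A, qW μ n y a * r a (f n y)
      ≤ (∑ n ∈ Finset.range N, ∑ y : Fin n → A,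
        PW μ n y * ∑ a : A, qW μ n y a * r a (fstar n y)) + 2 * E := by
    linarith [key1 f, key3, key2]
  have hfinal : (2 : ℝ) * E / N < ε := by
    have h1 : (2 : ℝ) * E / N ≤ 2 * ((Fintype.card A : ℝ) * (X / N)) := by
      rw [mul_div_assoc]
      have : E / N ≤ (Fintype.card A : ℝ) * (X / N) := by
        rw [div_le_iff₀ hNpos, mul_assoc, div_mul_cancel₀ _ hNpos.ne']
        exact hEX
      linarith
    have h2 : 2 * ((Fintype.card A : ℝ) * (X / N))
        < 2 * ((Fintype.card A : ℝ) * (ε / (2 * (Fintype.card A : ℝ)))) := by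
      have := mul_lt_mul_of_pos_left hδlt hcA
      linarith
    have h3 : 2 * ((Fintype.card A : ℝ) * (ε / (2 * (Fintype.card A : ℝ)))) = ε := by
      field_simp
    linarith
  calc (∑ n ∈ Finset.range N, ∑ y : Fin n → A,
        PW μ n y * ∑ a : A, qW μ n y a * r a (f n y)) / N
      ≤ ((∑ n ∈ Finset.range N, ∑ y : Fin n → A,
        PW μ n y * ∑ a : A, qW μ n y a * r a (fstar n y)) + 2 * E) / N := by
        gcongr
    _ = (∑ n ∈ Finset.range N, ∑ y : Fin n → A,
        PW μ n y * ∑ a : A, qW μ n y a * r a (fstar n y)) / N + 2 * E / N := add_div _ _ _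
    _ ≤ _ + ε := by linarith

end WMaux

/-- If `μ̃` weakly merges with `μ` then, for every `ε > 0`, a sufficiently patient agent
optimizing against `μ̃` plays `ε`-optimally against `μ`: there is `N₀` such that for all
`N > N₀` and every decision problem with payoffs in `[0,1]`, every `N`-period optimal
strategy under `μ̃` is `ε`-optimal for `N` periods under `μ`. -/
theorem weak_merging_implies_eps_optimality
    {A : Type} [Fintype A] [Nonempty A]
    [MeasurableSpace A] [MeasurableSingletonClass A]
    (μt μ : Measure (ℕ → A)) [IsProbabilityMeasure μt] [IsProbabilityMeasure μ]
    (hweak : ∀ᵐ ω ∂μ,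
      Tendsto (fun N : ℕ =>
          (∑ n ∈ Finset.range N, ⨆ a : A, |pred μt ω n a - pred μ ω n a|) / N)
        atTop (nhds 0)) :
    ∀ ε > (0 : ℝ), ∃ N₀ : ℕ, ∀ N > N₀,
      ∀ (D : Type) (_ : Fintype D) (_ : Nonempty D) (r : A → D → ℝ),
        (∀ a d, r a d ∈ Set.Icc (0 : ℝ) 1) →
        ∀ fstar : ∀ n : ℕ, (Fin n → A) → D,
          (∀ f : ∀ n : ℕ, (Fin n → A) → D, avgPayoff μt r N f ≤ avgPayoff μt r N fstar) →
          ∀ f : ∀ n : ℕ, (Fin n → A) → D,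
            avgPayoff μ r N f ≤ avgPayoff μ r N fstar + ε := by
  exact main_thm μt μ hweak
end

section
/- Let ν be a probability measure on Ω = A^ℕ (A a finite set) and let (Θ, B, λ, (ν_θ)) be the decomposition of ν induced by the future tail σ-algebra T→ = ∩_{m≥0} F_m^∞ (i.e., the conditional distributions of ν given T→). Then for λ-almost every θ, ν_θ is mixing: ν_θ(B) ∈ {0,1} for every B ∈ T→. -/
open MeasureTheory ProbabilityTheory Filter

/-- The σ-algebra on `A^ℕ` generated by the coordinates with index in `s`. -/
def coordSigmaN (A : Type*) [MeasurableSpace A] (s : Set ℕ) : MeasurableSpace (ℕ → A) :=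
  ⨆ k ∈ s, MeasurableSpace.comap (fun ω : ℕ → A => ω k) inferInstance

/-- The future tail σ-algebra `∩_m σ(ζ_m, ζ_{m+1}, …)` on `A^ℕ`. -/
def futureTail (A : Type*) [MeasurableSpace A] : MeasurableSpace (ℕ → A) :=
  ⨅ m : ℕ, coordSigmaN A (Set.Ici m)

set_option linter.unusedSectionVars false
section BR
variable {A : Type} [Fintype A] [Nonempty A] [MeasurableSpace A] [MeasurableSingletonClass A]

lemma coordSigmaN_le (s : Set ℕ) : coordSigmaN A s ≤ MeasurableSpace.pi := by
  refine iSup₂_le fun k _ => ?_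
  exact MeasurableSpace.comap_le_iff_le_map.2 (fun t ht => (measurable_pi_apply k) ht)

lemma futureTail_le : futureTail A ≤ MeasurableSpace.pi :=
  (iInf_le _ 0).trans (coordSigmaN_le _)

lemma futureTail_le_coord (m : ℕ) : futureTail A ≤ coordSigmaN A (Set.Ici m) := iInf_le _ m

lemma coordSigmaN_anti {s t : Set ℕ} (h : s ⊆ t) : coordSigmaN A s ≤ coordSigmaN A t := by
  refine iSup₂_le fun k hk => ?_
  exact le_iSup₂ (f := fun k (_ : k ∈ t) => MeasurableSpace.comap (fun ω : ℕ → A => ω k) inferInstance) k (h hk)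

/-- cylinder on coordinates `[m, m+n)` -/
def cyl (m n : ℕ) (y : Fin n → A) : Set (ℕ → A) := ⋂ i : Fin n, {ω | ω (m + i) = y i}

def cylF (A : Type) [MeasurableSpace A] (m : ℕ) : Set (Set (ℕ → A)) :=
  ⋃ n : ℕ, Set.range (fun y : Fin n → A => cyl m n y)

lemma countable_cylF (m : ℕ) : (cylF A m).Countable :=
  Set.countable_iUnion fun n => (Set.finite_range _).countable

lemma univ_mem_cylF (m : ℕ) : Set.univ ∈ cylF A m := by
  refine Set.mem_iUnion.2 ⟨0, ⟨Fin.elim0, ?_⟩⟩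
  simp [cyl]

lemma isPiSystem_cylF (m : ℕ) : IsPiSystem (cylF A m) := by
  rintro s hs t ht hst
  simp only [cylF, Set.mem_iUnion, Set.mem_range] at hs ht ⊢
  obtain ⟨n, y, rfl⟩ := hs
  obtain ⟨n', y', rfl⟩ := ht
  obtain ⟨ω, hω1, hω2⟩ := hst
  simp only [cyl, Set.mem_iInter, Set.mem_setOf_eq] at hω1 hω2
  rcases le_total n n' with h | h
  · refine ⟨n', y', ?_⟩
    have hsub : cyl m n' y' ⊆ cyl m n y := by
      intro ω' hω'
      simp only [cyl, Set.mem_iInter, Set.mem_setOf_eq] at hω' ⊢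
      intro i
      have h1 := hω' (Fin.castLE h i)
      simp only [Fin.coe_castLE] at h1
      have h2 := hω2 (Fin.castLE h i)
      simp only [Fin.coe_castLE] at h2
      rw [h1, ← h2, hω1 i]
    rw [Set.inter_eq_right.2 hsub]
  · refine ⟨n, y, ?_⟩
    have hsub : cyl m n y ⊆ cyl m n' y' := by
      intro ω' hω'
      simp only [cyl, Set.mem_iInter, Set.mem_setOf_eq] at hω' ⊢
      intro i
      have h1 := hω' (Fin.castLE h i)
      simp only [Fin.coe_castLE] at h1
      have h2 := hω1 (Fin.castLE h i)
      simp only [Fin.coe_castLE] at h2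
      rw [h1, ← h2, hω2 i]
    rw [Set.inter_eq_left.2 hsub]

lemma cyl_measurableSet (m n : ℕ) (y : Fin n → A) :
    MeasurableSet[coordSigmaN A (Set.Ici m)] (cyl m n y) := by
  refine MeasurableSet.iInter fun i => ?_
  have hle : MeasurableSpace.comap (fun ω : ℕ → A => ω (m + i)) inferInstance
      ≤ coordSigmaN A (Set.Ici m) :=
    le_iSup₂ (f := fun k (_ : k ∈ Set.Ici m) => MeasurableSpace.comap (fun ω : ℕ → A => ω k) inferInstance)
      (m + i) (Nat.le_add_right m i)
  exact hle _ ⟨{y i}, measurableSet_singleton _, rfl⟩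

lemma coordSigmaN_eq_generateFrom (m : ℕ) :
    coordSigmaN A (Set.Ici m) = MeasurableSpace.generateFrom (cylF A m) := by
  refine le_antisymm ?_ ?_
  · refine iSup₂_le fun k hk => ?_
    rintro t ⟨s, _, rfl⟩
    have : (fun ω : ℕ → A => ω k) ⁻¹' s = ⋃ a ∈ s, (fun ω : ℕ → A => ω k) ⁻¹' {a} := by
      ext ω; simp
    rw [this]
    refine MeasurableSet.biUnion s.to_countable fun a _ => ?_
    have hk' : m ≤ k := hk
    have hsingle : (fun ω : ℕ → A => ω k) ⁻¹' {a}
        = ⋃ y : {y : Fin (k - m + 1) → A // y ⟨k - m, Nat.lt_succ_self _⟩ = a},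
            cyl m (k - m + 1) y.1 := by
      ext ω
      simp only [Set.mem_preimage, Set.mem_singleton_iff, Set.mem_iUnion, cyl,
        Set.mem_iInter, Set.mem_setOf_eq]
      constructor
      · intro h
        refine ⟨⟨fun i => ω (m + i), ?_⟩, fun i => rfl⟩
        simp only
        rw [show m + (k - m) = k from by omega, h]
      · rintro ⟨⟨y, hy⟩, h⟩
        have := h ⟨k - m, Nat.lt_succ_self _⟩
        simp only at this
        rw [show m + (k - m) = k from by omega] at this
        rw [this, hy]
    rw [hsingle]
    refine MeasurableSet.iUnion fun y => ?_
    refine MeasurableSpace.measurableSet_generateFrom ?_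
    exact Set.mem_iUnion.2 ⟨k - m + 1, ⟨y.1, rfl⟩⟩
  · rw [MeasurableSpace.generateFrom_le_iff]
    intro s hs
    simp only [cylF, Set.mem_iUnion, Set.mem_range] at hs
    obtain ⟨n, y, rfl⟩ := hs
    exact cyl_measurableSet m n y

lemma pi_eq_generateFrom_cylF :
    (MeasurableSpace.pi : MeasurableSpace (ℕ → A)) = MeasurableSpace.generateFrom (cylF A 0) := by
  rw [← coordSigmaN_eq_generateFrom 0]
  refine le_antisymm ?_ (coordSigmaN_le _)
  refine iSup_le fun k => ?_
  exact le_iSup₂ (f := fun k (_ : k ∈ Set.Ici 0) => MeasurableSpace.comap (fun ω : ℕ → A => ω k) inferInstance)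
    k (Nat.zero_le k)

variable (ν : Measure (ℕ → A)) [IsProbabilityMeasure ν]

lemma kernel_toReal_measurable {C : Set (ℕ → A)} (hC : MeasurableSet C) :
    Measurable[futureTail A] (fun ω => (condExpKernel ν (futureTail A) ω C).toReal) :=
  Measurable.ennreal_toReal (measurable_condExpKernel hC)

/-- Lemma A: the conditional kernel evaluated on a tail set is the indicator. -/
lemma kernel_tail_indicator {S : Set (ℕ → A)} (hS : MeasurableSet[futureTail A] S) :
    ∀ᵐ ω ∂ν, (condExpKernel ν (futureTail A) ω S).toReal
      = S.indicator (fun _ => (1 : ℝ)) ω := by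
  have h1 := condExpKernel_ae_eq_condExp (μ := ν) futureTail_le (futureTail_le S hS)
  have hsm : StronglyMeasurable[futureTail A] (S.indicator (fun _ => (1 : ℝ))) :=
    stronglyMeasurable_const.indicator hS
  have h2 : ν[S.indicator (fun _ => (1 : ℝ)) | futureTail A]
      = S.indicator (fun _ => (1 : ℝ)) :=
    condExp_of_stronglyMeasurable futureTail_le hsm
      ((integrable_const (1 : ℝ)).indicator (futureTail_le S hS))
  filter_upwards [h1] with ω hω1
  rw [← measureReal_def, hω1, h2]

/-- Null sets of `ν` are null for a.e. kernel component. -/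
lemma kernel_ae_of_ae {p : (ℕ → A) → Prop} (h : ∀ᵐ x ∂ν, p x) :
    ∀ᵐ ω ∂ν, ∀ᵐ x ∂(condExpKernel ν (futureTail A) ω), p x := by
  set N := toMeasurable ν {x | ¬ p x} with hN
  have hNmeas : MeasurableSet N := measurableSet_toMeasurable _ _
  have hNnull : ν N = 0 := by
    rw [measure_toMeasurable]
    exact h
  have h1 := condExpKernel_ae_eq_condExp (μ := ν) futureTail_le hNmeas
  have hind : (N.indicator (fun _ => (1 : ℝ))) =ᵐ[ν] 0 := by
    have : ∀ᵐ x ∂ν, x ∉ N := by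
      rw [ae_iff]
      simpa using hNnull
    filter_upwards [this] with x hx
    simp [Set.indicator_of_notMem hx]
  have h2 : ν[N.indicator (fun _ => (1 : ℝ)) | futureTail A] =ᵐ[ν] 0 :=
    (condExp_congr_ae hind).trans (by rw [condExp_zero])
  filter_upwards [h1.trans h2] with ω hω
  have hfin : condExpKernel ν (futureTail A) ω N ≠ ⊤ := measure_ne_top _ _
  have hzero : condExpKernel ν (futureTail A) ω N = 0 := by
    have := ENNReal.toReal_eq_zero_iff (condExpKernel ν (futureTail A) ω N)
    rcases this.1 (by simpa [measureReal_def] using hω) with h' | h'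
    · exact h'
    · exact absurd h' hfin
  rw [ae_iff]
  exact measure_mono_null (fun x hx => subset_toMeasurable ν _ hx) hzero

/-- disintegration of the integral -/
lemma kernel_integral_eq {f : (ℕ → A) → ℝ} (hf : Integrable f ν) :
    ∫ ω, (∫ x, f x ∂(condExpKernel ν (futureTail A) ω)) ∂ν = ∫ x, f x ∂ν := by
  have h1 : ∫ ω, (∫ x, f x ∂(condExpKernel ν (futureTail A) ω)) ∂ν
      = ∫ ω, (ν[f | futureTail A]) ω ∂ν :=
    (integral_congr_ae (condExp_ae_eq_integral_condExpKernel futureTail_le hf)).symm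
  rw [h1, integral_condExp futureTail_le]

/-- consistency: a.e. component believes the kernel values are what they are at the center. -/
lemma kernel_consistent :
    ∀ᵐ ω ∂ν, ∀ C ∈ cylF A 0, ∀ᵐ x ∂(condExpKernel ν (futureTail A) ω),
      (condExpKernel ν (futureTail A) x C).toReal
        = (condExpKernel ν (futureTail A) ω C).toReal := by
  have hCmeas : ∀ C ∈ cylF A 0, MeasurableSet C := by
    intro C hC
    simp only [cylF, Set.mem_iUnion, Set.mem_range] at hC
    obtain ⟨n, y, rfl⟩ := hC
    exact coordSigmaN_le _ _ (cyl_measurableSet 0 n y)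
  set K := fun (C : Set (ℕ → A)) ω => (condExpKernel ν (futureTail A) ω C).toReal with hK
  have hSmeas : ∀ C, MeasurableSet C → ∀ q : ℚ,
      MeasurableSet[futureTail A] {x | K C x ≤ (q : ℝ)} :=
    fun C hC q => (kernel_toReal_measurable ν hC) measurableSet_Iic
  have hmain : ∀ᵐ ω ∂ν, ∀ C ∈ cylF A 0, ∀ q : ℚ,
      (condExpKernel ν (futureTail A) ω {x | K C x ≤ (q : ℝ)}).toReal
        = ({x | K C x ≤ (q : ℝ)}).indicator (fun _ => (1:ℝ)) ω := by
    rw [ae_ball_iff (countable_cylF 0)]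
    intro C hC
    rw [ae_all_iff]
    intro q
    exact kernel_tail_indicator ν (hSmeas C (hCmeas C hC) q)
  filter_upwards [hmain] with ω hω C hC
  haveI : IsProbabilityMeasure (condExpKernel ν (futureTail A) ω) := inferInstance
  have hq : ∀ q : ℚ,
      ∀ᵐ x ∂(condExpKernel ν (futureTail A) ω),
        (K C ω ≤ (q:ℝ) → K C x ≤ (q:ℝ)) ∧ (¬ K C ω ≤ (q:ℝ) → ¬ K C x ≤ (q:ℝ)) := by
    intro q
    have h := hω C hC q
    by_cases hle : K C ω ≤ (q:ℝ)
    · rw [Set.indicator_of_mem (show ω ∈ {x | K C x ≤ (q:ℝ)} from hle)] at h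
      have h1 : condExpKernel ν (futureTail A) ω {x | K C x ≤ (q:ℝ)} = 1 :=
        (ENNReal.toReal_eq_one_iff _).1 h
      have h0 : condExpKernel ν (futureTail A) ω {x | K C x ≤ (q:ℝ)}ᶜ = 0 := by
        rw [measure_compl (futureTail_le _ (hSmeas C (hCmeas C hC) q))
          (measure_ne_top _ _), h1, measure_univ, tsub_self]
      have : ∀ᵐ x ∂(condExpKernel ν (futureTail A) ω), K C x ≤ (q:ℝ) := by
        rw [ae_iff]
        exact h0
      filter_upwards [this] with x hx
      exact ⟨fun _ => hx, fun hn => absurd hle hn⟩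
    · rw [Set.indicator_of_notMem (show ω ∉ {x | K C x ≤ (q:ℝ)} from hle)] at h
      have h0 : condExpKernel ν (futureTail A) ω {x | K C x ≤ (q:ℝ)} = 0 := by
        rcases (ENNReal.toReal_eq_zero_iff _).1 h with h' | h'
        · exact h'
        · exact absurd h' (measure_ne_top _ _)
      have : ∀ᵐ x ∂(condExpKernel ν (futureTail A) ω), ¬ K C x ≤ (q:ℝ) := by
        rw [ae_iff]
        simpa using h0
      filter_upwards [this] with x hx
      exact ⟨fun hl => absurd hl hle, fun _ => hx⟩
  have hall := ae_all_iff.2 hq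
  filter_upwards [hall] with x hx
  refine le_antisymm ?_ ?_
  · by_contra hcon
    push_neg at hcon
    obtain ⟨q, hq1, hq2⟩ := exists_rat_btwn hcon
    exact absurd ((hx q).1 hq1.le) (not_le.2 hq2)
  · by_contra hcon
    push_neg at hcon
    obtain ⟨q, hq1, hq2⟩ := exists_rat_btwn hcon
    exact ((hx q).2 (not_le.2 hq2)) hq1.le

lemma cylF_measurableSet' {m : ℕ} {D : Set (ℕ → A)} (hD : D ∈ cylF A m) :
    MeasurableSet[coordSigmaN A (Set.Ici m)] D := by
  rw [coordSigmaN_eq_generateFrom m]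
  exact MeasurableSpace.measurableSet_generateFrom hD

/-- The `ν`-conditional expectation of `1_C` given `F_m` is, for a.e. `ω`, a density for
`x ↦ κ_ω(· ∩ C)` on `F_m`-measurable sets. -/
lemma kernel_setIntegral_condExp {C : Set (ℕ → A)} (hC : MeasurableSet C) (m : ℕ) :
    ∀ᵐ ω ∂ν, ∀ D : Set (ℕ → A), MeasurableSet[coordSigmaN A (Set.Ici m)] D →
      ∫ x in D, (ν[C.indicator (fun _ => (1:ℝ)) | coordSigmaN A (Set.Ici m)]) x
          ∂(condExpKernel ν (futureTail A) ω)
        = (condExpKernel ν (futureTail A) ω (D ∩ C)).toReal := by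
  have hF : coordSigmaN A (Set.Ici m) ≤ (MeasurableSpace.pi : MeasurableSpace (ℕ → A)) :=
    coordSigmaN_le _
  have hTF : futureTail A ≤ coordSigmaN A (Set.Ici m) := futureTail_le_coord m
  set f := ν[C.indicator (fun _ => (1:ℝ)) | coordSigmaN A (Set.Ici m)] with hfdef
  have hCint : Integrable (C.indicator (fun _ => (1:ℝ))) ν :=
    (integrable_const (1:ℝ)).indicator hC
  have hf_int : Integrable f ν := integrable_condExp
  have hf01 : ∀ᵐ x ∂ν, 0 ≤ f x ∧ f x ≤ 1 := by
    have h0 : 0 ≤ᵐ[ν] f := condExp_nonneg (Eventually.of_forall fun x => Set.indicator_nonneg (fun _ _ => zero_le_one) x)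
    have h1 : f ≤ᵐ[ν] ν[(fun _ => (1:ℝ)) | coordSigmaN A (Set.Ici m)] :=
      condExp_mono hCint (integrable_const _)
        (Eventually.of_forall fun x => Set.indicator_le_self' (fun _ _ => zero_le_one) x)
    have hc : ν[(fun _ => (1:ℝ)) | coordSigmaN A (Set.Ici m)] = fun _ => (1:ℝ) := condExp_const hF _
    filter_upwards [h0, h1] with x hx0 hx1
    exact ⟨hx0, by rw [hc] at hx1; exact hx1⟩
  -- per-D statement for cylinders
  have hperD : ∀ D ∈ cylF A m, ∀ᵐ ω ∂ν,
      ∫ x in D, f x ∂(condExpKernel ν (futureTail A) ω)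
        = (condExpKernel ν (futureTail A) ω (D ∩ C)).toReal := by
    intro D hD
    have hDF : MeasurableSet[coordSigmaN A (Set.Ici m)] D := cylF_measurableSet' hD
    have hDamb : MeasurableSet D := hF D hDF
    have h_int_g : Integrable (D.indicator f) ν := hf_int.indicator hDamb
    have h1 : ν[D.indicator f | futureTail A]
        =ᵐ[ν] fun ω => ∫ x, D.indicator f x ∂(condExpKernel ν (futureTail A) ω) :=
      condExp_ae_eq_integral_condExpKernel futureTail_le h_int_g
    have h2 : D.indicator f =ᵐ[ν] ν[(D ∩ C).indicator (fun _ => (1:ℝ)) | coordSigmaN A (Set.Ici m)] := by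
      have := condExp_indicator (μ := ν) (m := coordSigmaN A (Set.Ici m)) hCint hDF
      rw [Set.indicator_indicator] at this
      exact this.symm
    have h3 : ν[D.indicator f | futureTail A]
        =ᵐ[ν] ν[(D ∩ C).indicator (fun _ => (1:ℝ)) | futureTail A] :=
      (condExp_congr_ae h2).trans (condExp_condExp_of_le hTF hF)
    have h4 := condExpKernel_ae_eq_condExp (μ := ν) futureTail_le (hDamb.inter hC)
    filter_upwards [h1, h3, h4] with ω hω1 hω3 hω4
    rw [← integral_indicator hDamb, ← hω1, hω3, ← hω4, measureReal_def]
  rw [← ae_ball_iff (countable_cylF m)] at hperD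
  filter_upwards [hperD, kernel_ae_of_ae ν hf01, hf_int.condExpKernel_ae (m := futureTail A)]
    with ω hωD hω01 hωint
  intro D hDF
  haveI : IsProbabilityMeasure (condExpKernel ν (futureTail A) ω) := inferInstance
  set κ := condExpKernel ν (futureTail A) ω with hκdef
  set μ₁ := κ.withDensity (fun x => ENNReal.ofReal (f x)) with hμ₁
  set μ₂ := κ.restrict C with hμ₂
  have hfmeas : Measurable f := ((stronglyMeasurable_condExp (m := coordSigmaN A (Set.Ici m))).mono hF).measurable
  have hμ₁app : ∀ D' : Set (ℕ → A), MeasurableSet D' →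
      μ₁ D' = ENNReal.ofReal (∫ x in D', f x ∂κ) := by
    intro D' hD'
    rw [hμ₁, withDensity_apply _ hD',
      ← ofReal_integral_eq_lintegral_ofReal (hωint.restrict)
        (ae_restrict_of_ae (hω01.mono fun x hx => hx.1))]
  have hμ₁fin : IsFiniteMeasure μ₁ := by
    constructor
    rw [hμ₁, withDensity_apply _ MeasurableSet.univ, Measure.restrict_univ]
    calc ∫⁻ x, ENNReal.ofReal (f x) ∂κ ≤ ∫⁻ _, 1 ∂κ := by
          refine lintegral_mono_ae (hω01.mono fun x hx => ?_)
          exact ENNReal.ofReal_le_one.2 hx.2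
      _ < ⊤ := by simp
  haveI := hμ₁fin
  have htrim_eq : μ₁.trim hF = μ₂.trim hF := by
    haveI h1fin : IsFiniteMeasure (μ₁.trim hF) := by
      constructor
      rw [trim_measurableSet_eq hF MeasurableSet.univ]
      exact measure_lt_top _ _
    refine ext_of_generate_finite (cylF A m) ?_ (isPiSystem_cylF m) ?_ ?_
    · exact coordSigmaN_eq_generateFrom m
    · intro s hs
      have hsF : MeasurableSet[coordSigmaN A (Set.Ici m)] s := cylF_measurableSet' hs
      rw [trim_measurableSet_eq hF hsF, trim_measurableSet_eq hF hsF,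
        hμ₁app s (hF s hsF), hωD s hs, hμ₂, Measure.restrict_apply (hF s hsF),
        ENNReal.ofReal_toReal (measure_ne_top _ _)]
    · have hu : Set.univ ∈ cylF A m := univ_mem_cylF m
      rw [trim_measurableSet_eq hF MeasurableSet.univ, trim_measurableSet_eq hF MeasurableSet.univ,
        hμ₁app _ MeasurableSet.univ, hωD _ hu, hμ₂, Measure.restrict_apply MeasurableSet.univ,
        ENNReal.ofReal_toReal (measure_ne_top _ _)]
  have hDeq : μ₁ D = μ₂ D := by
    rw [← trim_measurableSet_eq hF hDF, ← trim_measurableSet_eq hF hDF, htrim_eq]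
  rw [hμ₁app D (hF D hDF), hμ₂, Measure.restrict_apply (hF D hDF)] at hDeq
  rw [← hDeq, ENNReal.toReal_ofReal]
  exact integral_nonneg_of_ae (ae_restrict_of_ae (hω01.mono fun x hx => hx.1))

noncomputable def condexpF (C : Set (ℕ → A)) (j : ℕ) : (ℕ → A) → ℝ :=
  ν[C.indicator (fun _ => (1:ℝ)) | coordSigmaN A (Set.Ici j)]

lemma condexpF_sm (C : Set (ℕ → A)) (j : ℕ) :
    StronglyMeasurable[coordSigmaN A (Set.Ici j)] (condexpF ν C j) :=
  stronglyMeasurable_condExp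

lemma condexpF_meas (C : Set (ℕ → A)) (j : ℕ) : Measurable (condexpF ν C j) :=
  ((condexpF_sm ν C j).mono (coordSigmaN_le _)).measurable

lemma condexpF_int (C : Set (ℕ → A)) (j : ℕ) : Integrable (condexpF ν C j) ν :=
  integrable_condExp

lemma condexpF_bounds {C : Set (ℕ → A)} (hC : MeasurableSet C) (j : ℕ) :
    ∀ᵐ x ∂ν, 0 ≤ condexpF ν C j x ∧ condexpF ν C j x ≤ 1 := by
  have hCint : Integrable (C.indicator (fun _ => (1:ℝ))) ν :=
    (integrable_const (1:ℝ)).indicator hC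
  have h0 : 0 ≤ᵐ[ν] condexpF ν C j :=
    condExp_nonneg (Eventually.of_forall fun x => Set.indicator_nonneg (fun _ _ => zero_le_one) x)
  have h1 : condexpF ν C j ≤ᵐ[ν] ν[(fun _ => (1:ℝ)) | coordSigmaN A (Set.Ici j)] :=
    condExp_mono hCint (integrable_const _)
      (Eventually.of_forall fun x => Set.indicator_le_self' (fun _ _ => zero_le_one) x)
  have hc : ν[(fun _ => (1:ℝ)) | coordSigmaN A (Set.Ici j)] = fun _ => (1:ℝ) :=
    condExp_const (coordSigmaN_le _) _
  filter_upwards [h0, h1] with x hx0 hx1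
  exact ⟨hx0, by rw [hc] at hx1; exact hx1⟩

lemma condexpF_norm_le {C : Set (ℕ → A)} (hC : MeasurableSet C) (j : ℕ) :
    ∀ᵐ x ∂ν, ‖condexpF ν C j x‖ ≤ 1 := by
  filter_upwards [condexpF_bounds ν hC j] with x hx
  rw [Real.norm_eq_abs, abs_le]
  exact ⟨le_trans (by norm_num) hx.1, hx.2⟩

lemma condexpF_tower (C : Set (ℕ → A)) {n n' : ℕ} (h : n ≤ n') :
    ν[condexpF ν C n | coordSigmaN A (Set.Ici n')] =ᵐ[ν] condexpF ν C n' :=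
  condExp_condExp_of_le (coordSigmaN_anti (Set.Ici_subset_Ici.2 h)) (coordSigmaN_le _)

lemma condexpF_mul_int {C : Set (ℕ → A)} (hC : MeasurableSet C) (n n' : ℕ) :
    Integrable (fun x => condexpF ν C n' x * condexpF ν C n x) ν :=
  (condexpF_int ν C n).bdd_mul ((condexpF_meas ν C n').aestronglyMeasurable)
    (condexpF_norm_le ν hC n')

lemma condexpF_mul_eq {C : Set (ℕ → A)} (hC : MeasurableSet C) {n n' : ℕ} (h : n ≤ n') :
    ∫ x, condexpF ν C n' x * condexpF ν C n x ∂ν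
      = ∫ x, condexpF ν C n' x * condexpF ν C n' x ∂ν := by
  have hpull : ν[(fun x => condexpF ν C n' x * condexpF ν C n x) | coordSigmaN A (Set.Ici n')]
      =ᵐ[ν] fun x => condexpF ν C n' x * (ν[condexpF ν C n | coordSigmaN A (Set.Ici n')]) x :=
    condExp_mul_of_stronglyMeasurable_left (condexpF_sm ν C n')
      (condexpF_mul_int ν hC n n') (condexpF_int ν C n)
  have h1 : ∫ x, condexpF ν C n' x * condexpF ν C n x ∂ν
      = ∫ x, (ν[(fun x => condexpF ν C n' x * condexpF ν C n x) | coordSigmaN A (Set.Ici n')]) x ∂ν :=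
    (integral_condExp (coordSigmaN_le _)).symm
  rw [h1, integral_congr_ae hpull]
  refine integral_congr_ae ?_
  filter_upwards [condexpF_tower ν C h] with x hx
  rw [hx]

lemma condexpF_sq_diff {C : Set (ℕ → A)} (hC : MeasurableSet C) {n n' : ℕ} (h : n ≤ n') :
    ∫ x, (condexpF ν C n x - condexpF ν C n' x) * (condexpF ν C n x - condexpF ν C n' x) ∂ν
      = ∫ x, condexpF ν C n x * condexpF ν C n x ∂ν
        - ∫ x, condexpF ν C n' x * condexpF ν C n' x ∂ν := by
  have i1 := condexpF_mul_int ν hC n n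
  have i2 := condexpF_mul_int ν hC n' n'
  have i3 := condexpF_mul_int ν hC n n'
  have hexp : (fun x => (condexpF ν C n x - condexpF ν C n' x)
        * (condexpF ν C n x - condexpF ν C n' x))
      = fun x => condexpF ν C n x * condexpF ν C n x
          - 2 * (condexpF ν C n' x * condexpF ν C n x)
          + condexpF ν C n' x * condexpF ν C n' x := by
    funext x; ring
  have i32 : Integrable (fun x => 2 * (condexpF ν C n' x * condexpF ν C n x)) ν :=
    i3.const_mul 2
  have i12 : Integrable (fun x => condexpF ν C n x * condexpF ν C n x
      - 2 * (condexpF ν C n' x * condexpF ν C n x)) ν := i1.sub i32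
  rw [hexp, integral_add i12 i2, integral_sub i1 i32,
    MeasureTheory.integral_const_mul, condexpF_mul_eq ν hC h]
  ring

open Topology

lemma abs_le_sq_div_add (x δ : ℝ) (hδ : 0 < δ) : |x| ≤ x * x / δ + δ := by
  rcases le_or_gt |x| δ with h | h
  · have : 0 ≤ x * x / δ := div_nonneg (mul_self_nonneg x) hδ.le
    linarith
  · have h1 : |x| * δ ≤ |x| * |x| := mul_le_mul_of_nonneg_left h.le (abs_nonneg x)
    have h2 : |x| ≤ |x| * |x| / δ := (le_div_iff₀ hδ).2 h1
    rw [abs_mul_abs_self x] at h2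
    linarith

lemma exists_good_subseq {C : Set (ℕ → A)} (hC : MeasurableSet C) :
    ∃ φ : ℕ → ℕ, ∃ g : (ℕ → A) → ℝ,
      (∀ᵐ x ∂ν, Tendsto (fun k => condexpF ν C (φ k) x) atTop (𝓝 (g x))) ∧
      g =ᵐ[ν] (fun x => (condExpKernel ν (futureTail A) x C).toReal) := by
  have hCint : Integrable (C.indicator (fun _ => (1:ℝ))) ν :=
    (integrable_const (1:ℝ)).indicator hC
  set a : ℕ → ℝ := fun n => ∫ x, condexpF ν C n x * condexpF ν C n x ∂ν with ha
  have h_anti : Antitone a := by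
    intro n n' h
    have heq := condexpF_sq_diff ν hC h
    have hnn : 0 ≤ ∫ x, (condexpF ν C n x - condexpF ν C n' x)
        * (condexpF ν C n x - condexpF ν C n' x) ∂ν :=
      integral_nonneg fun x => mul_self_nonneg _
    simp only [ha]
    linarith
  have h_bdd : BddBelow (Set.range a) := by
    refine ⟨0, ?_⟩
    rintro r ⟨n, rfl⟩
    exact integral_nonneg fun x => mul_self_nonneg _
  have htendsA : Tendsto a atTop (𝓝 (⨅ n, a n)) := tendsto_atTop_ciInf h_anti h_bdd
  have hNk : ∀ k : ℕ, ∃ N, ∀ n ≥ N, |a n - ⨅ n, a n| < (1/4:ℝ)^(k+1) := by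
    intro k
    have := (Metric.tendsto_atTop.1 htendsA ((1/4:ℝ)^(k+1)) (by positivity))
    exact this.imp fun N h => fun n hn => by simpa [Real.dist_eq] using h n hn
  choose N hN using hNk
  set φ : ℕ → ℕ := fun k => Nat.rec (N 0) (fun k ih => max (N (k+1)) (ih + 1)) k with hφdef
  have hφmono : StrictMono φ := by
    refine strictMono_nat_of_lt_succ fun k => ?_
    have h : φ (k+1) = max (N (k+1)) (φ k + 1) := rfl
    rw [h]
    exact lt_of_lt_of_le (Nat.lt_succ_self _) (le_max_right _ _)
  have hφN : ∀ k, N k ≤ φ k := by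
    intro k
    cases k with
    | zero => exact le_refl _
    | succ k => exact le_max_left _ _
  have hφclose : ∀ k, |a (φ k) - ⨅ n, a n| < (1/4:ℝ)^(k+1) := fun k => hN k (φ k) (hφN k)
  set Δ : ℕ → (ℕ → A) → ℝ := fun k x => condexpF ν C (φ k) x - condexpF ν C (φ (k+1)) x with hΔ
  have hΔint : ∀ k, Integrable (Δ k) ν := fun k =>
    (condexpF_int ν C (φ k)).sub (condexpF_int ν C (φ (k+1)))
  have hΔmul_int : ∀ k, Integrable (fun x => Δ k x * Δ k x) ν := by
    intro k
    refine (hΔint k).bdd_mul ((hΔint k).aestronglyMeasurable) (c := 2) ?_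
    filter_upwards [condexpF_norm_le ν hC (φ k), condexpF_norm_le ν hC (φ (k+1))]
      with x hx1 hx2
    calc ‖Δ k x‖ = ‖condexpF ν C (φ k) x - condexpF ν C (φ (k+1)) x‖ := rfl
      _ ≤ ‖condexpF ν C (φ k) x‖ + ‖condexpF ν C (φ (k+1)) x‖ := norm_sub_le _ _
      _ ≤ 2 := by linarith
  have hΔsq : ∀ k, ∫ x, Δ k x * Δ k x ∂ν ≤ 2 * (1/4:ℝ)^(k+1) := by
    intro k
    have heq := condexpF_sq_diff ν hC (hφmono.monotone (Nat.le_succ k))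
    have h1 := hφclose k
    have h2 := hφclose (k+1)
    have hle : a (φ k) - a (φ (k+1)) ≤ 2 * (1/4:ℝ)^(k+1) := by
      have l1 : a (φ k) - (⨅ n, a n) < (1/4:ℝ)^(k+1) := lt_of_abs_lt h1
      have l2 : -(1/4:ℝ)^(k+2) < a (φ (k+1)) - (⨅ n, a n) := neg_lt_of_abs_lt h2
      have l3 : (1/4:ℝ)^(k+2) ≤ (1/4:ℝ)^(k+1) :=
        pow_le_pow_of_le_one (by norm_num) (by norm_num) (by omega)
      linarith
    calc ∫ x, Δ k x * Δ k x ∂ν = a (φ k) - a (φ (k+1)) := heq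
      _ ≤ 2 * (1/4:ℝ)^(k+1) := hle
  have hΔabs : ∀ k, ∫ x, |Δ k x| ∂ν ≤ 3 * (1/2:ℝ)^k := by
    intro k
    have hδpos : (0:ℝ) < (1/2:ℝ)^k := by positivity
    have hmono : ∫ x, |Δ k x| ∂ν ≤ ∫ x, (Δ k x * Δ k x / (1/2:ℝ)^k + (1/2:ℝ)^k) ∂ν := by
      refine integral_mono (hΔint k).abs ?_ (fun x => abs_le_sq_div_add _ _ hδpos)
      exact ((hΔmul_int k).div_const _).add (integrable_const _)
    have hval : ∫ x, (Δ k x * Δ k x / (1/2:ℝ)^k + (1/2:ℝ)^k) ∂ν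
        = (∫ x, Δ k x * Δ k x ∂ν) / (1/2:ℝ)^k + (1/2:ℝ)^k := by
      rw [integral_add ((hΔmul_int k).div_const _) (integrable_const _), integral_div,
        integral_const]
      simp
    have h1 : (∫ x, Δ k x * Δ k x ∂ν) / (1/2:ℝ)^k ≤ (2 * (1/4:ℝ)^(k+1)) / (1/2:ℝ)^k :=
      (div_le_div_iff_of_pos_right hδpos).2 (hΔsq k)
    have hq : (2 * (1/4:ℝ)^(k+1)) / (1/2:ℝ)^k = (1/2) * (1/2:ℝ)^k := by
      rw [pow_succ, show (1/4:ℝ)^k = (1/2:ℝ)^k * (1/2:ℝ)^k from by rw [← mul_pow]; norm_num]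
      field_simp
      ring
    rw [hq] at h1
    linarith
  have hmeasΔ : ∀ k, Measurable (Δ k) := fun k =>
    (condexpF_meas ν C (φ k)).sub (condexpF_meas ν C (φ (k+1)))
  have hlint : ∫⁻ x, ∑' k, ENNReal.ofReal |Δ k x| ∂ν ≠ ⊤ := by
    rw [lintegral_tsum (fun k => ((hmeasΔ k).abs.ennreal_ofReal).aemeasurable)]
    have hle : ∀ k, ∫⁻ x, ENNReal.ofReal |Δ k x| ∂ν ≤ ENNReal.ofReal (3 * (1/2:ℝ)^k) := by
      intro k
      rw [← ofReal_integral_eq_lintegral_ofReal (hΔint k).abs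
        (Eventually.of_forall fun x => abs_nonneg _)]
      exact ENNReal.ofReal_le_ofReal (hΔabs k)
    refine ne_of_lt (lt_of_le_of_lt (ENNReal.tsum_le_tsum hle) ?_)
    rw [← ENNReal.ofReal_tsum_of_nonneg (fun k => by positivity)
      ((summable_geometric_of_lt_one (by norm_num) (by norm_num)).mul_left 3)]
    exact ENNReal.ofReal_lt_top
  have hsum_ae : ∀ᵐ x ∂ν, Summable fun k => |Δ k x| := by
    have h := ae_lt_top (Measurable.ennreal_tsum fun k => (hmeasΔ k).abs.ennreal_ofReal) hlint
    filter_upwards [h] with x hx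
    have hs : Summable fun k => (ENNReal.ofReal |Δ k x|).toReal := ENNReal.summable_toReal hx.ne
    exact hs.congr fun k => ENNReal.toReal_ofReal (abs_nonneg _)
  have hconv : ∀ᵐ x ∂ν, ∃ l, Tendsto (fun k => condexpF ν C (φ k) x) atTop (𝓝 l) := by
    filter_upwards [hsum_ae] with x hx
    have hcauchy : CauchySeq fun k => condexpF ν C (φ k) x := by
      refine cauchySeq_of_summable_dist (hx.congr fun k => ?_)
      rw [Real.dist_eq]
    exact cauchySeq_tendsto_of_complete hcauchy
  set g : (ℕ → A) → ℝ := fun x =>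
    (Filter.limsup (fun k => ENNReal.ofReal (condexpF ν C (φ k) x)) atTop).toReal with hg
  have hglim : ∀ᵐ x ∂ν, Tendsto (fun k => condexpF ν C (φ k) x) atTop (𝓝 (g x)) := by
    filter_upwards [hconv, ae_all_iff.2 fun k => condexpF_bounds ν hC (φ k)] with x hx hb
    obtain ⟨l, hl⟩ := hx
    have h0l : 0 ≤ l := le_of_tendsto_of_tendsto' tendsto_const_nhds hl fun k => (hb k).1
    have htop : Tendsto (fun k => ENNReal.ofReal (condexpF ν C (φ k) x)) atTop
        (𝓝 (ENNReal.ofReal l)) := (ENNReal.continuous_ofReal.tendsto l).comp hl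
    have hls : Filter.limsup (fun k => ENNReal.ofReal (condexpF ν C (φ k) x)) atTop
        = ENNReal.ofReal l := htop.limsup_eq
    have : g x = l := by
      rw [hg]
      simp only
      rw [hls, ENNReal.toReal_ofReal h0l]
    rw [this]
    exact hl
  have hg_measT : Measurable[futureTail A] g := by
    have hju : ∀ j, Measurable[coordSigmaN A (Set.Ici j)] g := by
      intro j
      have h1 : ∀ k, Measurable[coordSigmaN A (Set.Ici j)]
          (fun x => ENNReal.ofReal (condexpF ν C (φ (k + j)) x)) := by
        intro k
        have hjk : j ≤ φ (k + j) := le_trans (Nat.le_add_left j k) (hφmono.le_apply)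
        have hle : coordSigmaN A (Set.Ici (φ (k+j))) ≤ coordSigmaN A (Set.Ici j) :=
          coordSigmaN_anti (Set.Ici_subset_Ici.2 hjk)
        exact (((condexpF_sm ν C (φ (k+j))).mono hle).measurable).ennreal_ofReal
      have h2 := Measurable.limsup h1
      have h3 : (fun x => Filter.limsup
            (fun k => ENNReal.ofReal (condexpF ν C (φ (k + j)) x)) atTop)
          = fun x => Filter.limsup (fun k => ENNReal.ofReal (condexpF ν C (φ k) x)) atTop := by
        funext x
        exact Filter.limsup_nat_add (fun k => ENNReal.ofReal (condexpF ν C (φ k) x)) j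
      rw [h3] at h2
      exact h2.ennreal_toReal
    intro t ht
    exact MeasurableSpace.measurableSet_iInf.2 fun j => hju j ht
  have hg_meas : Measurable g := hg_measT.mono futureTail_le le_rfl
  have hg_bdd : ∀ᵐ x ∂ν, ‖g x‖ ≤ 1 := by
    filter_upwards [hglim, ae_all_iff.2 fun k => condexpF_bounds ν hC (φ k)] with x hx hb
    have h0 : 0 ≤ g x := le_of_tendsto_of_tendsto' tendsto_const_nhds hx fun k => (hb k).1
    have h1 : g x ≤ 1 := le_of_tendsto_of_tendsto' hx tendsto_const_nhds fun k => (hb k).2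
    rw [Real.norm_eq_abs, abs_le]
    exact ⟨by linarith, h1⟩
  have hid : g =ᵐ[ν] ν[C.indicator (fun _ => (1:ℝ)) | futureTail A] := by
    refine ae_eq_condExp_of_forall_setIntegral_eq futureTail_le hCint ?_ ?_ ?_
    · intro s _ _
      exact (Integrable.mono' (integrable_const 1) hg_meas.aestronglyMeasurable
        hg_bdd).integrableOn
    · intro s hs _
      have htend : Tendsto (fun k => ∫ x in s, condexpF ν C (φ k) x ∂ν) atTop
          (𝓝 (∫ x in s, g x ∂ν)) := by
        refine tendsto_integral_of_dominated_convergence (fun _ => (1:ℝ))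
          (fun k => (condexpF_meas ν C (φ k)).aestronglyMeasurable) (integrable_const _)
          (fun k => ae_restrict_of_ae (condexpF_norm_le ν hC (φ k)))
          (ae_restrict_of_ae hglim)
      have hconst : ∀ k : ℕ, ∫ x in s, condexpF ν C (φ k) x ∂ν
          = ∫ x in s, C.indicator (fun _ => (1:ℝ)) x ∂ν := fun k =>
        setIntegral_condExp (coordSigmaN_le _) hCint (futureTail_le_coord (φ k) s hs)
      simp only [hconst] at htend
      exact tendsto_nhds_unique htend tendsto_const_nhds
    · exact StronglyMeasurable.aestronglyMeasurable (hg_measT.stronglyMeasurable)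
  exact ⟨φ, g, hglim, hid.trans (condExpKernel_ae_eq_condExp (μ := ν) futureTail_le hC).symm⟩

lemma cylF0_measurable {C : Set (ℕ → A)} (hC : C ∈ cylF A 0) : MeasurableSet C := by
  simp only [cylF, Set.mem_iUnion, Set.mem_range] at hC
  obtain ⟨n, y, rfl⟩ := hC
  exact coordSigmaN_le _ _ (cyl_measurableSet 0 n y)

open Topology in
theorem tail_decomposition_components_mixing' :
    ∀ᵐ θ ∂ν, ∀ B : Set (ℕ → A), MeasurableSet[futureTail A] B →
      condExpKernel ν (futureTail A) θ B = 0 ∨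
        condExpKernel ν (futureTail A) θ B = 1 := by
  classical
  -- choose subsequences and limit functions for each cylinder
  have hch : ∀ C : Set (ℕ → A), ∃ φ : ℕ → ℕ, ∃ g : (ℕ → A) → ℝ,
      C ∈ cylF A 0 →
        ((∀ᵐ x ∂ν, Tendsto (fun k => condexpF ν C (φ k) x) atTop (𝓝 (g x))) ∧
          g =ᵐ[ν] fun x => (condExpKernel ν (futureTail A) x C).toReal) := by
    intro C
    by_cases h : C ∈ cylF A 0
    · obtain ⟨φ, g, hg1, hg2⟩ := exists_good_subseq ν (cylF0_measurable h)
      exact ⟨φ, g, fun _ => ⟨hg1, hg2⟩⟩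
    · exact ⟨id, fun _ => 0, fun hc => absurd hc h⟩
  choose φf gf hprop using hch
  -- the large a.e. set
  have h1 : ∀ᵐ ω ∂ν, ∀ C ∈ cylF A 0, ∀ m : ℕ, ∀ D : Set (ℕ → A),
      MeasurableSet[coordSigmaN A (Set.Ici m)] D →
        ∫ x in D, condexpF ν C m x ∂(condExpKernel ν (futureTail A) ω)
          = (condExpKernel ν (futureTail A) ω (D ∩ C)).toReal := by
    refine (ae_ball_iff (countable_cylF 0)).2 fun C hC => ?_
    exact ae_all_iff.2 fun m => kernel_setIntegral_condExp ν (cylF0_measurable hC) m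
  have h2 := kernel_consistent ν
  have h3 : ∀ᵐ ω ∂ν, ∀ C ∈ cylF A 0, ∀ᵐ x ∂(condExpKernel ν (futureTail A) ω),
      Tendsto (fun k => condexpF ν C (φf C k) x) atTop (𝓝 (gf C x)) ∧
        gf C x = (condExpKernel ν (futureTail A) x C).toReal := by
    refine (ae_ball_iff (countable_cylF 0)).2 fun C hC => ?_
    refine kernel_ae_of_ae ν ?_
    filter_upwards [(hprop C hC).1, (hprop C hC).2] with x hx1 hx2
    exact ⟨hx1, hx2⟩
  have h4 : ∀ᵐ ω ∂ν, ∀ C ∈ cylF A 0, ∀ᵐ x ∂(condExpKernel ν (futureTail A) ω),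
      ∀ k : ℕ, 0 ≤ condexpF ν C (φf C k) x ∧ condexpF ν C (φf C k) x ≤ 1 := by
    refine (ae_ball_iff (countable_cylF 0)).2 fun C hC => ?_
    exact kernel_ae_of_ae ν (ae_all_iff.2 fun k => condexpF_bounds ν (cylF0_measurable hC) (φf C k))
  filter_upwards [h1, h2, h3, h4] with θ hθ1 hθ2 hθ3 hθ4
  intro B hB
  haveI : IsProbabilityMeasure (condExpKernel ν (futureTail A) θ) := inferInstance
  have hBamb : MeasurableSet B := futureTail_le B hB
  have key : ∀ C ∈ cylF A 0,
      (condExpKernel ν (futureTail A) θ (B ∩ C)).toReal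
        = (condExpKernel ν (futureTail A) θ C).toReal
          * (condExpKernel ν (futureTail A) θ B).toReal := by
    intro C hC
    have hae : ∀ᵐ x ∂(condExpKernel ν (futureTail A) θ),
        gf C x = (condExpKernel ν (futureTail A) θ C).toReal := by
      filter_upwards [hθ3 C hC, hθ2 C hC] with x hx1 hx2
      rw [hx1.2, hx2]
    have htend : Tendsto (fun k => ∫ x in B, condexpF ν C (φf C k) x
        ∂(condExpKernel ν (futureTail A) θ)) atTop
        (𝓝 (∫ x in B, gf C x ∂(condExpKernel ν (futureTail A) θ))) := by
      refine tendsto_integral_of_dominated_convergence (fun _ => (1:ℝ))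
        (fun k => (condexpF_meas ν C _).aestronglyMeasurable) (integrable_const _)
        (fun k => ae_restrict_of_ae ((hθ4 C hC).mono fun x hx => ?_))
        (ae_restrict_of_ae ((hθ3 C hC).mono fun x hx => hx.1))
      show ‖condexpF ν C (φf C k) x‖ ≤ 1
      rw [Real.norm_eq_abs, abs_le]
      exact ⟨by linarith [(hx k).1], (hx k).2⟩
    have hconstk : ∀ k : ℕ, ∫ x in B, condexpF ν C (φf C k) x
        ∂(condExpKernel ν (futureTail A) θ)
        = (condExpKernel ν (futureTail A) θ (B ∩ C)).toReal := fun k =>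
      hθ1 C hC (φf C k) B (futureTail_le_coord _ B hB)
    have hlim2 : ∫ x in B, gf C x ∂(condExpKernel ν (futureTail A) θ)
        = (condExpKernel ν (futureTail A) θ C).toReal
          * (condExpKernel ν (futureTail A) θ B).toReal := by
      rw [integral_congr_ae (ae_restrict_of_ae hae), setIntegral_const, smul_eq_mul, mul_comm, measureReal_def]
    simp only [hconstk] at htend
    rw [← hlim2]
    exact (tendsto_nhds_unique htend tendsto_const_nhds).symm
  have hext : (condExpKernel ν (futureTail A) θ).restrict B
      = (condExpKernel ν (futureTail A) θ B) • (condExpKernel ν (futureTail A) θ) := by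
    refine ext_of_generate_finite (cylF A 0) pi_eq_generateFrom_cylF (isPiSystem_cylF 0) ?_ ?_
    · intro s hs
      have hsamb : MeasurableSet s := cylF0_measurable hs
      rw [Measure.restrict_apply hsamb, Measure.smul_apply, smul_eq_mul]
      have hfin1 : condExpKernel ν (futureTail A) θ (s ∩ B) ≠ ⊤ := measure_ne_top _ _
      have hfin2 : condExpKernel ν (futureTail A) θ B * condExpKernel ν (futureTail A) θ s ≠ ⊤ :=
        ENNReal.mul_ne_top (measure_ne_top _ _) (measure_ne_top _ _)
      refine (ENNReal.toReal_eq_toReal_iff' hfin1 hfin2).1 ?_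
      rw [Set.inter_comm, key s hs, ENNReal.toReal_mul]
      ring
    · rw [Measure.restrict_apply MeasurableSet.univ, Set.univ_inter, Measure.smul_apply,
        smul_eq_mul, measure_univ, mul_one]
  have hBB : condExpKernel ν (futureTail A) θ B
      = condExpKernel ν (futureTail A) θ B * condExpKernel ν (futureTail A) θ B := by
    have := congrArg (fun μ : Measure (ℕ → A) => μ B) hext
    simpa [Measure.restrict_apply hBamb, Set.inter_self, Measure.smul_apply, smul_eq_mul]
      using this
  rcases eq_or_ne (condExpKernel ν (futureTail A) θ B) 0 with h0 | h0
  · exact Or.inl h0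
  · exact Or.inr ((ENNReal.mul_eq_left h0 (measure_ne_top _ _)).1 hBB.symm)

end BR

/-- (Berti–Rigo / JKS Theorem 1.) In the decomposition of a probability measure `ν` on
`A^ℕ` induced by the future tail σ-algebra — realized by a regular conditional
distribution of `ν` given the tail — almost every component is mixing, i.e. assigns
probability `0` or `1` to every tail event. -/
theorem tail_decomposition_components_mixing
    {A : Type} [Fintype A] [Nonempty A]
    [MeasurableSpace A] [MeasurableSingletonClass A]
    (ν : Measure (ℕ → A)) [IsProbabilityMeasure ν] :
    ∀ᵐ θ ∂ν, ∀ B : Set (ℕ → A), MeasurableSet[futureTail A] B →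
      condExpKernel ν (futureTail A) θ B = 0 ∨
        condExpKernel ν (futureTail A) θ B = 1 :=
  tail_decomposition_components_mixing' ν
end
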